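/- arXiv:1401.6321 — 4 statements merged into one kernel-verified Lean document; each statement's English description precedes it below -/
import Mathlib

section
/- For each C > 0 and k ∈ ℤ≥0 there exists N ∈ ℤ≥0 such that for all n ≥ N, if μ is a partition of n whose associated irreducible representation π_μ of the symmetric group S_n has dimension at most C·n^k, then either the first row of μ has length ≥ n - k or the first column of μ has length ≥ n - k. -/
/-- The hook length of the cell `c = (i, j)` (0-indexed) of a Young diagram `μ`:
arm + leg + 1, i.e. `rowLen i - j + colLen j - i - 1`. -/
def YoungDiagram.hookLength (μ : YoungDiagram) (c : ℕ × ℕ) : ℕ :=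
  (μ.rowLen c.1 - c.2) + (μ.colLen c.2 - c.1) - 1

/-- The dimension of the irreducible representation `π_μ` of the symmetric group `S_n`
(`n = μ.card`) attached to a Young diagram `μ`, given by the hook length formula
`dim π_μ = n! / ∏ hooks`. -/
def YoungDiagram.dimIrrep (μ : YoungDiagram) : ℕ :=
  (Nat.factorial μ.card) / ∏ c ∈ μ.cells, μ.hookLength c

namespace YoungDiagram

/-- cells weakly after `x` in reverse row-major order -/
def rho (μ : YoungDiagram) (x : ℕ × ℕ) : ℕ :=
  (μ.cells.filter (fun y => x.1 < y.1 ∨ (x.1 = y.1 ∧ x.2 ≤ y.2))).card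

theorem rho_le_card (μ : YoungDiagram) (x : ℕ × ℕ) : μ.rho x ≤ μ.card :=
  Finset.card_filter_le _ _

theorem one_le_rho (μ : YoungDiagram) {x : ℕ × ℕ} (hx : x ∈ μ.cells) : 1 ≤ μ.rho x := by
  refine Finset.card_pos.2 ⟨x, Finset.mem_filter.2 ⟨hx, Or.inr ⟨rfl, le_refl _⟩⟩⟩

theorem rho_lt_rho (μ : YoungDiagram) {x y : ℕ × ℕ} (hx : x ∈ μ.cells) (hxy : x ≠ y)
    (hr : x.1 < y.1 ∨ (x.1 = y.1 ∧ x.2 ≤ y.2)) : μ.rho y < μ.rho x := by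
  apply Finset.card_lt_card
  rw [Finset.ssubset_iff_of_subset]
  · exact ⟨x, Finset.mem_filter.2 ⟨hx, Or.inr ⟨rfl, le_refl _⟩⟩, by
      simp only [Finset.mem_filter]
      rintro ⟨-, h | ⟨h1, h2⟩⟩
      · rcases hr with h' | ⟨h1', -⟩ <;> omega
      · rcases hr with h' | ⟨h1', h2'⟩
        · omega
        · exact hxy (Prod.ext_iff.2 ⟨by omega, by omega⟩)⟩
  · intro z hz
    simp only [Finset.mem_filter] at hz ⊢
    refine ⟨hz.1, ?_⟩
    rcases hz.2 with h | ⟨h1, h2⟩ <;> rcases hr with h' | ⟨h1', h2'⟩ <;>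
      first
        | exact Or.inl (by omega)
        | (right; constructor <;> omega)

theorem injOn_rho (μ : YoungDiagram) : Set.InjOn μ.rho μ.cells := by
  intro x hx y hy hxy
  have hx' : x ∈ μ.cells := hx
  have hy' : y ∈ μ.cells := hy
  by_contra hne
  have htot : (x.1 < y.1 ∨ (x.1 = y.1 ∧ x.2 ≤ y.2)) ∨ (y.1 < x.1 ∨ (y.1 = x.1 ∧ y.2 ≤ x.2)) := by
    rcases x with ⟨a, b⟩; rcases y with ⟨c, d⟩; simp at hne ⊢; omega
  rcases htot with h | h
  · exact absurd hxy (by have := μ.rho_lt_rho hx' hne h; omega)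
  · exact absurd hxy (by have := μ.rho_lt_rho hy' (Ne.symm hne) h; omega)

theorem prod_rho (μ : YoungDiagram) : ∏ x ∈ μ.cells, μ.rho x = Nat.factorial μ.card := by
  have himg : μ.cells.image μ.rho = Finset.Icc 1 μ.card := by
    apply Finset.eq_of_subset_of_card_le
    · intro m hm
      simp only [Finset.mem_image] at hm
      obtain ⟨x, hx, rfl⟩ := hm
      exact Finset.mem_Icc.2 ⟨μ.one_le_rho hx, μ.rho_le_card x⟩
    · rw [Nat.card_Icc, Finset.card_image_of_injOn μ.injOn_rho]
      simp [YoungDiagram.card]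
  have h2 : ∏ m ∈ μ.cells.image μ.rho, m = ∏ x ∈ μ.cells, μ.rho x :=
    Finset.prod_image (fun x hx y hy h => μ.injOn_rho hx hy h)
  rw [← h2, himg,
    show Finset.Icc 1 μ.card = Finset.Ico 1 (μ.card + 1) by rw [Finset.Ico_add_one_right_eq_Icc]]
  exact Finset.prod_Ico_id_eq_factorial μ.card

end YoungDiagram

namespace YoungDiagram

theorem hookLength_pos {μ : YoungDiagram} {x : ℕ × ℕ} (hx : x ∈ μ.cells) :
    0 < μ.hookLength x := by
  obtain ⟨i, j⟩ := x
  have h1 : j < μ.rowLen i := mem_iff_lt_rowLen.1 (μ.mem_cells _ |>.1 hx)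
  have h2 : i < μ.colLen j := mem_iff_lt_colLen.1 (μ.mem_cells _ |>.1 hx)
  simp only [hookLength]
  omega

theorem hookLength_le_rho (μ : YoungDiagram) {i j : ℕ} (h : (i, j) ∈ μ) :
    μ.hookLength (i, j) ≤ μ.rho (i, j) := by
  have h1 : j < μ.rowLen i := mem_iff_lt_rowLen.1 h
  have h2 : i < μ.colLen j := mem_iff_lt_colLen.1 h
  set H1 : Finset (ℕ × ℕ) := {i} ×ˢ Finset.Ico j (μ.rowLen i) with hH1
  set H2 : Finset (ℕ × ℕ) := Finset.Ico (i+1) (μ.colLen j) ×ˢ {j} with hH2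
  have hsub : H1 ∪ H2 ⊆ μ.cells.filter (fun y => i < y.1 ∨ (i = y.1 ∧ j ≤ y.2)) := by
    intro y hy
    rcases Finset.mem_union.1 hy with hy | hy
    · rw [hH1, Finset.mem_product, Finset.mem_singleton, Finset.mem_Ico] at hy
      refine Finset.mem_filter.2 ⟨(μ.mem_cells _).2 ?_, Or.inr ⟨hy.1.symm, by omega⟩⟩
      rw [show y = (y.1, y.2) from rfl, mem_iff_lt_rowLen, hy.1]
      exact hy.2.2
    · rw [hH2, Finset.mem_product, Finset.mem_singleton, Finset.mem_Ico] at hy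
      refine Finset.mem_filter.2 ⟨(μ.mem_cells _).2 ?_, Or.inl (by omega)⟩
      rw [show y = (y.1, y.2) from rfl, mem_iff_lt_colLen, hy.2]
      exact hy.1.2
  have hdisj : Disjoint H1 H2 := by
    rw [Finset.disjoint_left]
    intro y hy1 hy2
    rw [hH1, Finset.mem_product, Finset.mem_singleton] at hy1
    rw [hH2, Finset.mem_product, Finset.mem_Ico] at hy2
    omega
  have hcard : (H1 ∪ H2).card = (μ.rowLen i - j) + (μ.colLen j - (i+1)) := by
    rw [Finset.card_union_of_disjoint hdisj, hH1, hH2, Finset.card_product,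
      Finset.card_product]
    simp [Nat.card_Ico]
  have := Finset.card_le_card hsub
  rw [hcard] at this
  calc μ.hookLength (i, j) ≤ (μ.rowLen i - j) + (μ.colLen j - (i+1)) := by
        simp only [hookLength]; omega
    _ ≤ _ := this

theorem rho_row_zero (μ : YoungDiagram) {j : ℕ} (h : (0, j) ∈ μ) :
    μ.rho (0, j) = μ.card - j := by
  have hneg : μ.cells.filter (fun y => ¬((0:ℕ) < y.1 ∨ ((0:ℕ) = y.1 ∧ j ≤ y.2)))
      = {(0:ℕ)} ×ˢ Finset.range j := by
    ext y
    simp only [Finset.mem_filter, Finset.mem_product, Finset.mem_singleton, Finset.mem_range]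
    constructor
    · rintro ⟨hy, hn⟩; push_neg at hn; omega
    · rintro ⟨h0, hlt⟩
      refine ⟨(μ.mem_cells _).2 ?_, by omega⟩
      have : ((0:ℕ), y.2) ∈ μ := μ.up_left_mem (le_refl 0) (by omega) h
      rwa [show y = (y.1, y.2) from rfl, h0]
    
  have htot := Finset.card_filter_add_card_filter_not
    (s := μ.cells) (p := fun y => (0:ℕ) < y.1 ∨ ((0:ℕ) = y.1 ∧ j ≤ y.2))
  rw [hneg] at htot
  have hjcard : (({(0:ℕ)} ×ˢ Finset.range j)).card = j := by simp
  have hj : j < μ.rowLen 0 := mem_iff_lt_rowLen.1 h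
  have hr : μ.rowLen 0 ≤ μ.card := by
    rw [rowLen_eq_card]
    exact Finset.card_le_card (fun y hy => (mem_row_iff.1 hy).1)
  rw [hjcard] at htot
  have hc : μ.card = μ.cells.card := rfl
  simp only [rho]
  omega

theorem prod_hook_le (μ : YoungDiagram) (s : Finset (ℕ × ℕ)) (hs : s ⊆ μ.cells) :
    (∏ x ∈ μ.cells, μ.hookLength x) * (∏ x ∈ s, μ.rho x)
      ≤ (∏ x ∈ s, μ.hookLength x) * Nat.factorial μ.card := by
  have hsplit : ∏ x ∈ μ.cells, μ.hookLength x
      = (∏ x ∈ μ.cells \ s, μ.hookLength x) * (∏ x ∈ s, μ.hookLength x) :=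
    (Finset.prod_sdiff hs).symm
  have hsplit2 : Nat.factorial μ.card
      = (∏ x ∈ μ.cells \ s, μ.rho x) * (∏ x ∈ s, μ.rho x) := by
    rw [← μ.prod_rho, ← Finset.prod_sdiff hs]
  have hle : ∏ x ∈ μ.cells \ s, μ.hookLength x ≤ ∏ x ∈ μ.cells \ s, μ.rho x := by
    apply Finset.prod_le_prod'
    intro x hx
    have hx' := Finset.mem_sdiff.1 hx |>.1
    obtain ⟨i, j⟩ := x
    exact μ.hookLength_le_rho ((μ.mem_cells _).1 hx')
  calc (∏ x ∈ μ.cells, μ.hookLength x) * (∏ x ∈ s, μ.rho x)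
      = (∏ x ∈ μ.cells \ s, μ.hookLength x) * ((∏ x ∈ s, μ.hookLength x) * ∏ x ∈ s, μ.rho x) := by
        rw [hsplit]; ring
    _ ≤ (∏ x ∈ μ.cells \ s, μ.rho x) * ((∏ x ∈ s, μ.hookLength x) * ∏ x ∈ s, μ.rho x) :=
        Nat.mul_le_mul_right _ hle
    _ = (∏ x ∈ s, μ.hookLength x) * Nat.factorial μ.card := by rw [hsplit2]; ring

end YoungDiagram

namespace YoungDiagram

theorem row_zero_cells_subset (μ : YoungDiagram) {t : ℕ} (ht : t < μ.rowLen 0) :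
    ((0:ℕ), t) ∈ μ.cells := (μ.mem_cells _).2 (mem_iff_lt_rowLen.2 ht)

theorem hookLength_row_zero_tail (μ : YoungDiagram) {j : ℕ} (hj1 : μ.rowLen 1 ≤ j)
    (hj2 : j < μ.rowLen 0) : μ.hookLength (0, j) = μ.rowLen 0 - j := by
  have hc1 : μ.colLen j ≤ 1 := by
    by_contra hc
    push_neg at hc
    exact absurd (mem_iff_lt_rowLen.1 (mem_iff_lt_colLen.2 hc)) (by omega)
  have hc2 : 1 ≤ μ.colLen j := mem_iff_lt_colLen.1 (mem_iff_lt_rowLen.2 hj2)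
  simp only [hookLength]
  omega

theorem hookLength_row_zero_le (μ : YoungDiagram) {j : ℕ} (hj : j < μ.rowLen 0) :
    μ.hookLength (0, j) ≤ (μ.rowLen 0 - j) + (μ.colLen 0 - 1) := by
  have hc : μ.colLen j ≤ μ.colLen 0 := μ.colLen_anti 0 j (Nat.zero_le j)
  have hc2 : 1 ≤ μ.colLen j := mem_iff_lt_colLen.1 (mem_iff_lt_rowLen.2 hj)
  simp only [hookLength]
  omega

theorem prod_hooks_pos (μ : YoungDiagram) : 0 < ∏ x ∈ μ.cells, μ.hookLength x :=
  Finset.prod_pos (fun x hx => hookLength_pos hx)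

theorem le_dimIrrep_of_mul_le (μ : YoungDiagram) {m : ℕ}
    (h : m * ∏ x ∈ μ.cells, μ.hookLength x ≤ Nat.factorial μ.card) : m ≤ μ.dimIrrep := by
  rw [dimIrrep, Nat.le_div_iff_mul_le μ.prod_hooks_pos]
  exact h

theorem choose_le_dimIrrep (μ : YoungDiagram) :
    Nat.choose (μ.card - μ.rowLen 1) (μ.rowLen 0 - μ.rowLen 1) ≤ μ.dimIrrep := by
  set n := μ.card
  set r := μ.rowLen 0 with hr
  set a := μ.rowLen 1 with ha
  have har : a ≤ r := μ.rowLen_anti 0 1 (by omega)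
  set s : Finset (ℕ × ℕ) := {(0:ℕ)} ×ˢ Finset.Ico a r with hsdef
  have hs : s ⊆ μ.cells := by
    intro y hy
    rw [hsdef, Finset.mem_product, Finset.mem_singleton, Finset.mem_Ico] at hy
    have := μ.row_zero_cells_subset hy.2.2
    rwa [show y = (y.1, y.2) from rfl, hy.1]
  have hprods : ∀ f : ℕ × ℕ → ℕ, ∏ x ∈ s, f x = ∏ t ∈ Finset.Ico a r, f (0, t) := by
    intro f
    rw [hsdef, Finset.prod_product]
    simp
  have P1 : ∏ x ∈ s, μ.hookLength x = Nat.factorial (r - a) := by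
    rw [hprods]
    rw [Finset.prod_Ico_eq_prod_range]
    have : ∀ i ∈ Finset.range (r - a), μ.hookLength (0, a + i) = (r - a) - i := by
      intro i hi
      rw [Finset.mem_range] at hi
      rw [μ.hookLength_row_zero_tail (by omega) (by omega)]
      omega
    rw [Finset.prod_congr rfl this, ← Nat.descFactorial_eq_prod_range,
      Nat.descFactorial_self]
  have P2 : ∏ x ∈ s, μ.rho x = Nat.descFactorial (n - a) (r - a) := by
    rw [hprods]
    rw [Finset.prod_Ico_eq_prod_range]
    have : ∀ i ∈ Finset.range (r - a), μ.rho (0, a + i) = (n - a) - i := by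
      intro i hi
      rw [Finset.mem_range] at hi
      rw [μ.rho_row_zero (mem_iff_lt_rowLen.2 (by omega))]
      have : a + i ≤ n := by
        have hrn : r ≤ n := by
          rw [hr, rowLen_eq_card]
          exact Finset.card_le_card (fun y hy => (mem_row_iff.1 hy).1)
        omega
      omega
    rw [Finset.prod_congr rfl this, ← Nat.descFactorial_eq_prod_range]
  have key := μ.prod_hook_le s hs
  rw [P1, P2, Nat.descFactorial_eq_factorial_mul_choose] at key
  apply μ.le_dimIrrep_of_mul_le
  have hfpos : 0 < Nat.factorial (r - a) := Nat.factorial_pos _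
  refine Nat.le_of_mul_le_mul_left ?_ hfpos
  calc Nat.factorial (r - a) * (Nat.choose (n - a) (r - a) * ∏ x ∈ μ.cells, μ.hookLength x)
      = (∏ x ∈ μ.cells, μ.hookLength x) * (Nat.factorial (r - a) * Nat.choose (n - a) (r - a)) := by
        ring
    _ ≤ Nat.factorial (r - a) * Nat.factorial n := key
    _ = Nat.factorial (r - a) * Nat.factorial μ.card := rfl

end YoungDiagram

namespace YoungDiagram

theorem rowLen_le_card (μ : YoungDiagram) : μ.rowLen 0 ≤ μ.card := by
  rw [rowLen_eq_card]
  exact Finset.card_le_card (fun y hy => (mem_row_iff.1 hy).1)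

theorem case2_le_dimIrrep (μ : YoungDiagram)
    (h34 : 4 * (μ.rowLen 0 + μ.colLen 0 - 1) ≤ 3 * μ.card)
    (m : ℕ) (hm : m * 3 ^ μ.rowLen 1 ≤ 4 ^ μ.rowLen 1) : m ≤ μ.dimIrrep := by
  set n := μ.card
  set r := μ.rowLen 0 with hr
  set a := μ.rowLen 1 with ha
  have har : a ≤ r := μ.rowLen_anti 0 1 (by omega)
  have hrn : r ≤ n := μ.rowLen_le_card
  set s : Finset (ℕ × ℕ) := {(0:ℕ)} ×ˢ Finset.range a with hsdef
  have hs : s ⊆ μ.cells := by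
    intro y hy
    rw [hsdef, Finset.mem_product, Finset.mem_singleton, Finset.mem_range] at hy
    have := μ.row_zero_cells_subset (lt_of_lt_of_le hy.2 har)
    rwa [show y = (y.1, y.2) from rfl, hy.1]
  have hprods : ∀ f : ℕ × ℕ → ℕ, ∏ x ∈ s, f x = ∏ t ∈ Finset.range a, f (0, t) := by
    intro f
    rw [hsdef, Finset.prod_product]
    simp
  -- pointwise : 4 * hook ≤ 3 * rho on s
  have hpt : ∀ t ∈ Finset.range a, 4 * μ.hookLength (0, t) ≤ 3 * μ.rho (0, t) := by
    intro t ht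
    rw [Finset.mem_range] at ht
    have htr : t < r := lt_of_lt_of_le ht har
    have h1 := μ.hookLength_row_zero_le htr
    rw [μ.rho_row_zero (mem_iff_lt_rowLen.2 htr)]
    have hc1 : 1 ≤ μ.colLen 0 := mem_iff_lt_colLen.1 (mem_iff_lt_rowLen.2 (by omega : (0:ℕ) < μ.rowLen 0))
    omega
  have hkey1 : 4 ^ a * ∏ x ∈ s, μ.hookLength x ≤ 3 ^ a * ∏ x ∈ s, μ.rho x := by
    rw [hprods, hprods]
    calc 4 ^ a * ∏ t ∈ Finset.range a, μ.hookLength (0, t)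
        = ∏ t ∈ Finset.range a, 4 * μ.hookLength (0, t) := by
          rw [Finset.prod_mul_distrib, Finset.prod_const, Finset.card_range]
      _ ≤ ∏ t ∈ Finset.range a, 3 * μ.rho (0, t) := Finset.prod_le_prod' hpt
      _ = 3 ^ a * ∏ t ∈ Finset.range a, μ.rho (0, t) := by
          rw [Finset.prod_mul_distrib, Finset.prod_const, Finset.card_range]
  have key := μ.prod_hook_le s hs
  apply μ.le_dimIrrep_of_mul_le
  have hrhopos : 0 < ∏ x ∈ s, μ.rho x :=
    Finset.prod_pos (fun x hx => μ.one_le_rho (hs hx))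
  have hpos : 0 < 3 ^ a * ∏ x ∈ s, μ.rho x := by positivity
  refine Nat.le_of_mul_le_mul_left ?_ hpos
  calc (3 ^ a * ∏ x ∈ s, μ.rho x) * (m * ∏ x ∈ μ.cells, μ.hookLength x)
      = (m * 3 ^ a) * ((∏ x ∈ μ.cells, μ.hookLength x) * ∏ x ∈ s, μ.rho x) := by ring
    _ ≤ 4 ^ a * ((∏ x ∈ μ.cells, μ.hookLength x) * ∏ x ∈ s, μ.rho x) :=
        Nat.mul_le_mul_right _ hm
    _ ≤ 4 ^ a * ((∏ x ∈ s, μ.hookLength x) * Nat.factorial μ.card) :=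
        Nat.mul_le_mul_left _ key
    _ = (4 ^ a * ∏ x ∈ s, μ.hookLength x) * Nat.factorial μ.card := by ring
    _ ≤ (3 ^ a * ∏ x ∈ s, μ.rho x) * Nat.factorial μ.card :=
        Nat.mul_le_mul_right _ hkey1

end YoungDiagram

namespace YoungDiagram

theorem card_le_mul (μ : YoungDiagram) : μ.card ≤ μ.rowLen 0 * μ.colLen 0 := by
  have hsub : μ.cells ⊆ Finset.range (μ.colLen 0) ×ˢ Finset.range (μ.rowLen 0) := by
    intro y hy
    have hy' := (μ.mem_cells _).1 hy
    rw [show y = (y.1, y.2) from rfl] at hy'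
    have h1 : y.2 < μ.rowLen y.1 := mem_iff_lt_rowLen.1 hy'
    have h2 : y.1 < μ.colLen y.2 := mem_iff_lt_colLen.1 hy'
    have h3 := μ.rowLen_anti 0 y.1 (Nat.zero_le _)
    have h4 := μ.colLen_anti 0 y.2 (Nat.zero_le _)
    rw [Finset.mem_product, Finset.mem_range, Finset.mem_range]
    omega
  have := Finset.card_le_card hsub
  rw [Finset.card_product, Finset.card_range, Finset.card_range] at this
  calc μ.card = μ.cells.card := rfl
    _ ≤ _ := by rw [Nat.mul_comm] at this; exact this

theorem card_lower (μ : YoungDiagram) :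
    μ.rowLen 0 + μ.rowLen 1 + (μ.colLen 0 - 2) ≤ μ.card := by
  set T : Finset (ℕ × ℕ) := Finset.Ico 2 (μ.colLen 0) ×ˢ {(0:ℕ)} with hT
  have hsub : (μ.row 0 ∪ μ.row 1) ∪ T ⊆ μ.cells := by
    intro y hy
    rcases Finset.mem_union.1 hy with hy | hy
    · rcases Finset.mem_union.1 hy with hy | hy
      · exact (μ.mem_cells _).2 (mem_row_iff.1 hy).1
      · exact (μ.mem_cells _).2 (mem_row_iff.1 hy).1
    · rw [hT, Finset.mem_product, Finset.mem_singleton, Finset.mem_Ico] at hy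
      refine (μ.mem_cells _).2 ?_
      rw [show y = (y.1, y.2) from rfl, hy.2, mem_iff_lt_colLen]
      exact hy.1.2
  have hd1 : Disjoint (μ.row 0) (μ.row 1) := by
    rw [Finset.disjoint_left]
    intro y h0 h1
    have := (mem_row_iff.1 h0).2
    have := (mem_row_iff.1 h1).2
    omega
  have hd2 : Disjoint (μ.row 0 ∪ μ.row 1) T := by
    rw [Finset.disjoint_left]
    intro y h0 h1
    rw [hT, Finset.mem_product, Finset.mem_Ico] at h1
    rcases Finset.mem_union.1 h0 with h | h <;>
      [have := (mem_row_iff.1 h).2; have := (mem_row_iff.1 h).2] <;> omega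
  have hcard := Finset.card_le_card hsub
  rw [Finset.card_union_of_disjoint hd2, Finset.card_union_of_disjoint hd1] at hcard
  rw [hT, Finset.card_product, Nat.card_Ico] at hcard
  rw [← rowLen_eq_card, ← rowLen_eq_card] at hcard
  simpa using hcard

theorem cells_transpose (μ : YoungDiagram) :
    μ.transpose.cells = μ.cells.image Prod.swap := by
  ext y
  simp only [Finset.mem_image]
  rw [mem_cells, mem_transpose]
  constructor
  · intro h
    exact ⟨y.swap, (μ.mem_cells _).2 h, Prod.swap_swap y⟩
  · rintro ⟨z, hz, rfl⟩
    rw [Prod.swap_swap]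
    exact (μ.mem_cells _).1 hz

theorem card_transpose (μ : YoungDiagram) : μ.transpose.card = μ.card := by
  show μ.transpose.cells.card = μ.cells.card
  rw [cells_transpose]
  exact Finset.card_image_of_injective _ Prod.swap_injective

theorem hookLength_transpose (μ : YoungDiagram) (x : ℕ × ℕ) :
    μ.transpose.hookLength x = μ.hookLength x.swap := by
  simp only [hookLength, Prod.fst_swap, Prod.snd_swap, rowLen_transpose, colLen_transpose]
  omega

theorem dimIrrep_transpose (μ : YoungDiagram) : μ.transpose.dimIrrep = μ.dimIrrep := by
  rw [dimIrrep, dimIrrep, card_transpose, cells_transpose]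
  congr 1
  rw [Finset.prod_image (fun x _ y _ h => Prod.swap_injective h)]
  exact Finset.prod_congr rfl (fun x _ => by rw [hookLength_transpose, Prod.swap_swap])

theorem zero_zero_mem (μ : YoungDiagram) (h : 0 < μ.card) : ((0:ℕ), (0:ℕ)) ∈ μ := by
  obtain ⟨x, hx⟩ := Finset.card_pos.1 h
  exact μ.up_left_mem (Nat.zero_le _) (Nat.zero_le _) ((μ.mem_cells _).1 hx)

end YoungDiagram

theorem choose_mono_of_le_half {N t u : ℕ} (htu : t ≤ u) (hu : 2 * u ≤ N) :
    N.choose t ≤ N.choose u := by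
  induction u with
  | zero => simp_all
  | succ v ih =>
    rcases Nat.lt_or_ge t (v + 1) with h | h
    · exact le_trans (ih (by omega) (by omega))
        (Nat.choose_le_succ_of_lt_half_left (by omega))
    · have : t = v + 1 := by omega
      rw [this]

theorem choose_le_choose_middle {N t m : ℕ} (ht : t ≤ m) (ht2 : t ≤ N - m) (hm : m ≤ N) :
    N.choose t ≤ N.choose m := by
  rcases Nat.lt_or_ge (2 * m) (N + 1) with h | h
  · exact choose_mono_of_le_half ht (by omega)
  · rw [← Nat.choose_symm hm]
    exact choose_mono_of_le_half ht2 (by omega)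

theorem pow_le_fac_mul_choose (N K : ℕ) (h : K ≤ N) :
    (N + 1 - K) ^ K ≤ Nat.factorial K * N.choose K := by
  rw [← Nat.descFactorial_eq_factorial_mul_choose, Nat.descFactorial_eq_prod_range]
  calc (N + 1 - K) ^ K = (N + 1 - K) ^ (Finset.range K).card := by rw [Finset.card_range]
    _ ≤ ∏ i ∈ Finset.range K, (N - i) := by
        apply Finset.pow_card_le_prod
        intro i hi
        rw [Finset.mem_range] at hi
        omega

theorem choose_le_pow_43 (a K : ℕ) (hK : K ≤ a) :
    (a.choose K : ℝ) * (1/3)^K ≤ (4/3)^a := by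
  have h : ((1:ℝ)/3 + 1)^a
      = ∑ i ∈ Finset.range (a+1), ((1:ℝ)/3)^i * 1^(a-i) * (a.choose i : ℝ) :=
    add_pow _ _ _
  have h2 : ((1:ℝ)/3)^K * 1^(a-K) * a.choose K
      ≤ ∑ i ∈ Finset.range (a+1), ((1:ℝ)/3)^i * 1^(a-i) * a.choose i := by
    apply Finset.single_le_sum (f := fun i => ((1:ℝ)/3)^i * 1^(a-i) * (a.choose i : ℝ))
    · intro i _
      positivity
    · rw [Finset.mem_range]; omega
  rw [one_pow, mul_one] at h2
  calc (a.choose K : ℝ) * (1/3)^K = (1/3)^K * a.choose K := by ring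
    _ ≤ ((1:ℝ)/3 + 1)^a := by rw [h]; exact h2
    _ = (4/3)^a := by norm_num

open YoungDiagram in
set_option maxHeartbeats 2000000 in
theorem key_lemma (C : ℝ) (hC : 0 < C) (k : ℕ) (n : ℕ) (μ : YoungDiagram)
    (hcard : μ.card = n)
    (hcr : μ.colLen 0 ≤ μ.rowLen 0)
    (hrow : μ.rowLen 0 + k + 1 ≤ n)
    (hn1 : (4:ℝ)^(k+1) * (Nat.factorial (k+1)) * (C+1) ≤ n)
    (hn4k : 4 * k + 1 ≤ n)
    (hsqrt : max (6*k+6)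
      (Nat.ceil ((2:ℝ)^(2*k+1) * (Nat.factorial (2*k+1)) * 3^(2*k+1) * (C * 2^(2*k) + 2)))
      ≤ Nat.sqrt n)
    (hdim : (μ.dimIrrep : ℝ) ≤ C * (n:ℝ)^k) : False := by
  set r := μ.rowLen 0 with hr
  set a := μ.rowLen 1 with ha
  set c := μ.colLen 0 with hcdef
  set s := Nat.sqrt n with hsdef
  have hsk : 6*k+6 ≤ s := le_trans (le_max_left _ _) hsqrt
  have hceil : ((2:ℝ)^(2*k+1) * (Nat.factorial (2*k+1)) * 3^(2*k+1) * (C * 2^(2*k) + 2)) ≤ s :=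
    Nat.ceil_le.1 (le_trans (le_max_right _ _) hsqrt)
  have har : a ≤ r := μ.rowLen_anti 0 1 (by omega)
  have hlow : r + a + (c - 2) ≤ n := by
    have := μ.card_lower; rwa [hcard] at this
  have hrs : s ≤ r := by
    have h1 : n ≤ r * r := le_trans (hcard ▸ μ.card_le_mul) (Nat.mul_le_mul_left r hcr)
    calc s ≤ Nat.sqrt (r * r) := Nat.sqrt_le_sqrt h1
      _ = r := Nat.sqrt_eq r
  have hnpos : 1 ≤ n := by omega
  have hnk1 : (1:ℝ) ≤ (n:ℝ)^k := one_le_pow₀ (by exact_mod_cast hnpos : (1:ℝ) ≤ (n:ℝ))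
  have hdim_nonneg : (0:ℕ) ≤ μ.dimIrrep := Nat.zero_le _
  rcases le_or_gt (a + k + 1) r with hcase | hcase
  · -- Case 1 : long flat first row
    have h1 : Nat.choose (n - a) (r - a) ≤ μ.dimIrrep := by
      have := μ.choose_le_dimIrrep
      rwa [hcard, ← hr, ← ha] at this
    have h2 : Nat.choose (n - a) (k+1) ≤ Nat.choose (n - a) (r - a) :=
      choose_le_choose_middle (by omega) (by omega) (by omega)
    set X := n - a - k with hX
    have h3 : X ^ (k+1) ≤ Nat.factorial (k+1) * Nat.choose (n - a) (k+1) := by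
      have := pow_le_fac_mul_choose (n - a) (k+1) (by omega)
      rwa [show n - a + 1 - (k+1) = X by omega] at this
    have hX4 : n ≤ 4 * X := by omega
    -- real chain
    have hA1 : ((C+1) * (n:ℝ)^k) * ((Nat.factorial (k+1) : ℝ) * 4^(k+1)) ≤ (n:ℝ)^(k+1) := by
      have := mul_le_mul_of_nonneg_right hn1 (by positivity : (0:ℝ) ≤ (n:ℝ)^k)
      calc ((C+1) * (n:ℝ)^k) * ((Nat.factorial (k+1) : ℝ) * 4^(k+1))
          = ((4:ℝ)^(k+1) * (Nat.factorial (k+1)) * (C+1)) * (n:ℝ)^k := by ring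
        _ ≤ (n:ℝ) * (n:ℝ)^k := this
        _ = (n:ℝ)^(k+1) := by ring
    have hA2 : (n:ℝ)^(k+1) ≤ 4^(k+1) * (X:ℝ)^(k+1) := by
      have hc1 : (n:ℝ) ≤ 4 * (X:ℝ) := by exact_mod_cast hX4
      calc (n:ℝ)^(k+1) ≤ (4 * (X:ℝ))^(k+1) :=
            pow_le_pow_left₀ (by positivity) hc1 _
        _ = 4^(k+1) * (X:ℝ)^(k+1) := by rw [mul_pow]
    have hA3 : (X:ℝ)^(k+1) ≤ (Nat.factorial (k+1) : ℝ) * (Nat.choose (n-a) (k+1) : ℝ) := by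
      exact_mod_cast h3
    have hA4 : (Nat.choose (n-a) (k+1) : ℝ) ≤ (μ.dimIrrep : ℝ) := by
      exact_mod_cast le_trans h2 h1
    have hfpos : (0:ℝ) < (Nat.factorial (k+1) : ℝ) * 4^(k+1) := by positivity
    have hfinal : (C+1) * (n:ℝ)^k ≤ (μ.dimIrrep : ℝ) := by
      have hchain : ((C+1) * (n:ℝ)^k) * ((Nat.factorial (k+1) : ℝ) * 4^(k+1))
          ≤ (μ.dimIrrep : ℝ) * ((Nat.factorial (k+1) : ℝ) * 4^(k+1)) := by
        calc ((C+1) * (n:ℝ)^k) * ((Nat.factorial (k+1) : ℝ) * 4^(k+1))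
            ≤ (n:ℝ)^(k+1) := hA1
          _ ≤ 4^(k+1) * (X:ℝ)^(k+1) := hA2
          _ ≤ 4^(k+1) * ((Nat.factorial (k+1) : ℝ) * (Nat.choose (n-a) (k+1) : ℝ)) := by
              apply mul_le_mul_of_nonneg_left hA3 (by positivity)
          _ ≤ 4^(k+1) * ((Nat.factorial (k+1) : ℝ) * (μ.dimIrrep : ℝ)) := by
              apply mul_le_mul_of_nonneg_left
                (mul_le_mul_of_nonneg_left hA4 (by positivity)) (by positivity)
          _ = (μ.dimIrrep : ℝ) * ((Nat.factorial (k+1) : ℝ) * 4^(k+1)) := by ring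
      exact le_of_mul_le_mul_right hchain hfpos
    nlinarith [hnk1, hfinal, hdim]
  · -- Case 2 : fat shape
    have hc1 : 1 ≤ c := by
      have h0 : ((0:ℕ),(0:ℕ)) ∈ μ := μ.zero_zero_mem (by omega)
      have := mem_iff_lt_colLen.1 h0
      omega
    have h34 : 4 * (r + c - 1) ≤ 3 * μ.card := by rw [hcard]; omega
    set m := 4^a / 3^a with hm
    have hdm : m ≤ μ.dimIrrep := μ.case2_le_dimIrrep h34 m (Nat.div_mul_le_self _ _)
    have h3a : (0:ℕ) < 3^a := pow_pos (by norm_num) a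
    have hmod : 4^a < 3^a * m + 3^a := by
      have h2 := Nat.mod_lt (4^a) h3a
      conv_lhs => rw [← Nat.div_add_mod (4^a) (3^a)]
      exact Nat.add_lt_add_left h2 _
    have hm1 : ((4:ℝ)/3)^a < (m:ℝ) + 1 := by
      rw [div_pow, div_lt_iff₀ (by positivity)]
      calc (4:ℝ)^a < 3^a * m + 3^a := by exact_mod_cast hmod
        _ = ((m:ℝ)+1) * 3^a := by ring
    have hK : 2*k+1 ≤ a := by omega
    have hB := choose_le_pow_43 a (2*k+1) hK
    have hC1 := pow_le_fac_mul_choose a (2*k+1) hK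
    set Y := a - 2*k with hY
    have hYe : a + 1 - (2*k+1) = Y := by omega
    rw [hYe] at hC1
    have hY2 : s ≤ 2 * Y := by omega
    have hns : n < (s+1)*(s+1) := Nat.lt_succ_sqrt n
    have hs1 : (1:ℕ) ≤ s := by omega
    have hsr : (1:ℝ) ≤ (s:ℝ) := by exact_mod_cast hs1
    have hnk2 : (n:ℝ)^k ≤ 2^(2*k) * (s:ℝ)^(2*k) := by
      have h2 : (n:ℝ) ≤ ((s:ℝ)+1)*((s:ℝ)+1) := by exact_mod_cast hns.le
      have h1 : (n:ℝ) ≤ (2*(s:ℝ))^2 := by nlinarith [hsr]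
      calc (n:ℝ)^k ≤ ((2*(s:ℝ))^2)^k := pow_le_pow_left₀ (by positivity) h1 k
        _ = 2^(2*k) * (s:ℝ)^(2*k) := by
            rw [← pow_mul, mul_pow]
    have hFpos : (0:ℝ) < (Nat.factorial (2*k+1) : ℝ) :=
      Nat.cast_pos.mpr (Nat.factorial_pos (2*k+1))
    have hT1 : (C * (n:ℝ)^k + 2) * ((2:ℝ)^(2*k+1) * (Nat.factorial (2*k+1) : ℝ) * 3^(2*k+1)) ≤ (s:ℝ)^(2*k+1) := by
      have hs2k : (1:ℝ) ≤ (s:ℝ)^(2*k) := one_le_pow₀ hsr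
      have e1 : C * (n:ℝ)^k + 2 ≤ (C * 2^(2*k) + 2) * (s:ℝ)^(2*k) := by
        nlinarith [hnk2, hC.le, hs2k]
      calc (C * (n:ℝ)^k + 2) * ((2:ℝ)^(2*k+1) * (Nat.factorial (2*k+1) : ℝ) * 3^(2*k+1))
          ≤ ((C * 2^(2*k) + 2) * (s:ℝ)^(2*k)) * ((2:ℝ)^(2*k+1) * (Nat.factorial (2*k+1) : ℝ) * 3^(2*k+1)) :=
            mul_le_mul_of_nonneg_right e1 (by positivity)
        _ = ((2:ℝ)^(2*k+1) * (Nat.factorial (2*k+1) : ℝ) * 3^(2*k+1) * (C * 2^(2*k) + 2)) * (s:ℝ)^(2*k) := by ring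
        _ ≤ (s:ℝ) * (s:ℝ)^(2*k) := mul_le_mul_of_nonneg_right hceil (by positivity)
        _ = (s:ℝ)^(2*k+1) := by ring
    have hT2 : (s:ℝ)^(2*k+1) ≤ (2:ℝ)^(2*k+1) * (Y:ℝ)^(2*k+1) := by
      have hcc : (s:ℝ) ≤ 2*(Y:ℝ) := by exact_mod_cast hY2
      calc (s:ℝ)^(2*k+1) ≤ (2*(Y:ℝ))^(2*k+1) := pow_le_pow_left₀ (by positivity) hcc _
        _ = (2:ℝ)^(2*k+1) * (Y:ℝ)^(2*k+1) := by rw [mul_pow]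
    have hT3 : (Y:ℝ)^(2*k+1) ≤ (Nat.factorial (2*k+1) : ℝ) * (a.choose (2*k+1) : ℝ) := by
      exact_mod_cast hC1
    have hT4 : (a.choose (2*k+1) : ℝ) ≤ (4/3)^a * 3^(2*k+1) := by
      have hone : ((1:ℝ)/3)^(2*k+1) * 3^(2*k+1) = 1 := by
        rw [← mul_pow]; norm_num
      calc (a.choose (2*k+1) : ℝ)
          = (a.choose (2*k+1) : ℝ) * (((1:ℝ)/3)^(2*k+1) * 3^(2*k+1)) := by rw [hone, mul_one]
        _ = ((a.choose (2*k+1) : ℝ) * ((1:ℝ)/3)^(2*k+1)) * 3^(2*k+1) := by ring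
        _ ≤ (4/3)^a * 3^(2*k+1) := mul_le_mul_of_nonneg_right hB (by positivity)
    have hchain : (C * (n:ℝ)^k + 2) * ((2:ℝ)^(2*k+1) * (Nat.factorial (2*k+1) : ℝ) * 3^(2*k+1))
        ≤ ((4:ℝ)/3)^a * ((2:ℝ)^(2*k+1) * (Nat.factorial (2*k+1) : ℝ) * 3^(2*k+1)) := by
      calc (C * (n:ℝ)^k + 2) * ((2:ℝ)^(2*k+1) * (Nat.factorial (2*k+1) : ℝ) * 3^(2*k+1))
          ≤ (s:ℝ)^(2*k+1) := hT1
        _ ≤ (2:ℝ)^(2*k+1) * (Y:ℝ)^(2*k+1) := hT2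
        _ ≤ (2:ℝ)^(2*k+1) * ((Nat.factorial (2*k+1) : ℝ) * (a.choose (2*k+1) : ℝ)) :=
            mul_le_mul_of_nonneg_left hT3 (by positivity)
        _ ≤ (2:ℝ)^(2*k+1) * ((Nat.factorial (2*k+1) : ℝ) * ((4/3)^a * 3^(2*k+1))) :=
            mul_le_mul_of_nonneg_left
              (mul_le_mul_of_nonneg_left hT4 hFpos.le) (by positivity)
        _ = ((4:ℝ)/3)^a * ((2:ℝ)^(2*k+1) * (Nat.factorial (2*k+1) : ℝ) * 3^(2*k+1)) := by ring
    have hfin : C * (n:ℝ)^k + 2 ≤ ((4:ℝ)/3)^a :=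
      le_of_mul_le_mul_right hchain (by positivity)
    have hdmr : (m:ℝ) ≤ (μ.dimIrrep : ℝ) := by exact_mod_cast hdm
    linarith [hm1, hfin, hdmr, hdim]


/-- For each `C > 0` and `k ∈ ℤ≥0` there exists `N` such that for all `n ≥ N`, if `μ` is a
partition of `n` with `dim π_μ ≤ C·n^k`, then the first row or first column of `μ` has
length `≥ n - k`. -/
theorem stmt0 (C : ℝ) (hC : 0 < C) (k : ℕ) :
    ∃ N : ℕ, ∀ n : ℕ, N ≤ n → ∀ μ : YoungDiagram, μ.card = n →
      (μ.dimIrrep : ℝ) ≤ C * (n : ℝ) ^ k →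
      n - k ≤ μ.rowLen 0 ∨ n - k ≤ μ.colLen 0 := by
  set S : ℕ := max (6*k+6)
      (Nat.ceil ((2:ℝ)^(2*k+1) * (Nat.factorial (2*k+1)) * 3^(2*k+1) * (C * 2^(2*k) + 2)))
    with hS
  refine ⟨max ((S+1)*(S+1))
    (max (Nat.ceil ((4:ℝ)^(k+1) * (Nat.factorial (k+1)) * (C+1))) (4*k+1)), ?_⟩
  intro n hn μ hcard hdim
  by_contra hcon
  push_neg at hcon
  obtain ⟨h1, h2⟩ := hcon
  have hnA : (S+1)*(S+1) ≤ n := le_trans (le_max_left _ _) hn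
  have hnB : Nat.ceil ((4:ℝ)^(k+1) * (Nat.factorial (k+1)) * (C+1)) ≤ n :=
    le_trans (le_trans (le_max_left _ _) (le_max_right _ _)) hn
  have hn4k : 4*k+1 ≤ n :=
    le_trans (le_trans (le_max_right _ _) (le_max_right _ _)) hn
  have hn1 : (4:ℝ)^(k+1) * (Nat.factorial (k+1)) * (C+1) ≤ n := Nat.ceil_le.1 hnB
  have hsqrt : S ≤ Nat.sqrt n := by
    calc S ≤ S + 1 := by omega
      _ = Nat.sqrt ((S+1)*(S+1)) := (Nat.sqrt_eq (S+1)).symm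
      _ ≤ Nat.sqrt n := Nat.sqrt_le_sqrt hnA
  rw [hS] at hsqrt
  rcases le_or_gt (μ.colLen 0) (μ.rowLen 0) with hwlog | hwlog
  · exact key_lemma C hC k n μ hcard hwlog (by omega) hn1 hn4k hsqrt hdim
  · apply key_lemma C hC k n μ.transpose
    · rw [μ.card_transpose]; exact hcard
    · rw [YoungDiagram.colLen_transpose, YoungDiagram.rowLen_transpose]; exact hwlog.le
    · rw [YoungDiagram.rowLen_transpose]; omega
    · exact hn1
    · exact hn4k
    · exact hsqrt
    · rw [μ.dimIrrep_transpose]; exact hdim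
end

section
/- Let μ be a Young diagram with n cells, let d be the length of its first row, and let μ' be the diagram obtained from μ by deleting its first row. Then dim π_μ = dim π_{μ'} · C(n,d) · ∏_{i=1}^{d} (1 + (c_i - 1)/i)^{-1}, where c_i is the length of the (d-i+1)-th column of μ. -/
open Finset Nat

namespace HookAux

/-! ### Generalities -/

lemma natAbs_prod {α : Type*} (s : Finset α) (f : α → ℤ) :
    (∏ x ∈ s, f x).natAbs = ∏ x ∈ s, (f x).natAbs :=
  map_prod Int.natAbsHom f s

lemma prod_Icc_id (n : ℕ) : ∏ x ∈ Icc 1 n, x = n ! := by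
  rw [← Finset.prod_range_add_one_eq_factorial, range_eq_Ico, ← Finset.Ico_add_one_right_eq_Icc]
  exact (Finset.prod_Ico_eq_prod_range _ 1 (n + 1)).trans (by simp [add_comm])

lemma eq_of_lt_iff {a b : ℕ} (h : ∀ j, j < a ↔ j < b) : a = b := by
  rcases Nat.lt_trichotomy a b with hl | he | hl
  · exact absurd ((h a).mpr hl) (lt_irrefl a)
  · exact he
  · exact absurd ((h b).mp hl) (lt_irrefl b)

lemma Ioo_eq_image {k : ℕ} (i : Fin k) :
    Finset.Ioo (i : ℕ) k = (Finset.Ioi i).image Fin.val := by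
  ext x
  simp only [Finset.mem_Ioo, Finset.mem_image, Finset.mem_Ioi]
  constructor
  · rintro ⟨h1, h2⟩; exact ⟨⟨x, h2⟩, by simp [Fin.lt_iff_val_lt_val, h1], rfl⟩
  · rintro ⟨j, hj, rfl⟩
    rw [Fin.lt_iff_val_lt_val] at hj
    exact ⟨hj, j.isLt⟩

lemma finprod_Ioi_eq {M : Type*} [CommMonoid M] (k : ℕ) (h : ℕ → ℕ → M) :
    (∏ i : Fin k, ∏ j ∈ Ioi i, h (i : ℕ) (j : ℕ))
      = ∏ i ∈ range k, ∏ j ∈ Ioo i k, h i j := by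
  rw [← Fin.prod_univ_eq_prod_range (fun i => ∏ j ∈ Ioo i k, h i j) k]
  apply Finset.prod_congr rfl
  intro i _
  rw [Ioo_eq_image i, Finset.prod_image (fun a _ b _ hab => Fin.val_injective hab)]

/-! ### The Vandermonde/determinant integrality lemma -/

theorem key_dvd (L : ℕ → ℕ) (k n : ℕ)
    (hanti : ∀ i j : ℕ, i < j → j < k → L j ≤ L i)
    (hsum : ∑ i ∈ range k, L i = n + ∑ i ∈ range k, i) :
    (∏ i ∈ range k, (L i)!) ∣ n ! * ∏ i ∈ range k, ∏ j ∈ Ioo i k, (L i - L j) := by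
  classical
  set v : Fin k → ℚ := fun i => (L i : ℚ) with hv
  set M : Matrix (Fin k) (Fin k) ℚ :=
    Matrix.of (fun i j : Fin k => (((L (i : ℕ)).descFactorial (j : ℕ) : ℕ) : ℚ)) with hM
  have hdet : (Matrix.vandermonde v).det = M.det := by
    rw [Matrix.det_eval_matrixOfPolynomials_eq_det_vandermonde v
      (fun i => descPochhammer ℚ (i : ℕ))
      (fun i => descPochhammer_natDegree ℚ i) (fun i => monic_descPochhammer ℚ i)]
    congr 1
    ext i j
    exact descPochhammer_eval_eq_descFactorial ℚ (L i) j
  have hterm : ∀ σ : Equiv.Perm (Fin k), ∃ t : ℕ,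
      (t : ℚ) * ∏ i ∈ range k, ((L i)! : ℚ)
        = (n ! : ℚ) * ∏ i : Fin k, (((L (σ i : ℕ)).descFactorial (i : ℕ) : ℕ) : ℚ) := by
    intro σ
    by_cases hgood : ∀ i : Fin k, (i : ℕ) ≤ L (σ i : ℕ)
    · set f : Fin k → ℕ := fun i => L (σ i : ℕ) - (i : ℕ) with hf
      have hfs : ∑ i : Fin k, f i = n := by
        have h1 : ∑ i : Fin k, (f i + (i : ℕ)) = ∑ i : Fin k, L (σ i : ℕ) :=
          Finset.sum_congr rfl fun i _ => Nat.sub_add_cancel (hgood i)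
        rw [Finset.sum_add_distrib] at h1
        have h2 : ∑ i : Fin k, L (σ i : ℕ) = ∑ i : Fin k, L (i : ℕ) :=
          Equiv.sum_comp σ (fun i => L (i : ℕ))
        have h3 : ∑ i : Fin k, L (i : ℕ) = ∑ i ∈ range k, L i :=
          Fin.sum_univ_eq_sum_range _ k
        have h4 : ∑ i : Fin k, (i : ℕ) = ∑ i ∈ range k, i :=
          Fin.sum_univ_eq_sum_range (fun i => i) k
        omega
      have hdvd : (∏ i : Fin k, (f i)!) ∣ n ! := by
        rw [← hfs]; exact Nat.prod_factorial_dvd_factorial_sum _ _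
      refine ⟨n ! / ∏ i : Fin k, (f i)!, ?_⟩
      have hfac : ∏ i ∈ range k, ((L i)! : ℚ)
          = (∏ i : Fin k, ((f i)! : ℚ))
            * ∏ i : Fin k, (((L (σ i : ℕ)).descFactorial (i : ℕ) : ℕ) : ℚ) := by
        rw [← Finset.prod_mul_distrib]
        rw [← Fin.prod_univ_eq_prod_range (fun i => ((L i)! : ℚ)) k]
        rw [← Equiv.prod_comp σ (fun i => ((L (i : ℕ))! : ℚ))]
        apply Finset.prod_congr rfl
        intro i _
        rw [← Nat.cast_mul, Nat.factorial_mul_descFactorial (hgood i)]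
      rw [hfac, ← mul_assoc]
      congr 1
      rw [← Nat.cast_prod, ← Nat.cast_mul, Nat.div_mul_cancel hdvd]
    · push_neg at hgood
      obtain ⟨i, hi⟩ := hgood
      refine ⟨0, ?_⟩
      have h0 : ((L (σ i : ℕ)).descFactorial (i : ℕ) : ℕ) = 0 :=
        Nat.descFactorial_eq_zero_iff_lt.mpr hi
      rw [Finset.prod_eq_zero (Finset.mem_univ i) (by rw [h0]; norm_num)]
      simp
  choose t ht using hterm
  set z : ℤ := ∑ σ : Equiv.Perm (Fin k), (Equiv.Perm.sign σ : ℤ) * (t σ : ℤ) with hz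
  have hmain : (z : ℚ) * ∏ i ∈ range k, ((L i)! : ℚ) = (n ! : ℚ) * M.det := by
    rw [Matrix.det_apply', Finset.mul_sum, hz]
    push_cast
    rw [Finset.sum_mul]
    apply Finset.sum_congr rfl
    intro σ _
    rw [mul_assoc, ht σ]
    simp only [hM, Matrix.of_apply]
    ring
  set W : ℤ := ∏ i : Fin k, ∏ j ∈ Ioi i, ((L (j : ℕ) : ℤ) - (L (i : ℕ) : ℤ)) with hW
  have hdet2 : M.det = (W : ℚ) := by
    rw [← hdet, Matrix.det_vandermonde, hW]
    push_cast
    rfl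
  have hZeq : z * (∏ i ∈ range k, ((L i)! : ℤ)) = (n ! : ℤ) * W := by
    have h := hmain
    rw [hdet2] at h
    exact_mod_cast h
  have hWabs : W.natAbs = ∏ i ∈ range k, ∏ j ∈ Ioo i k, (L i - L j) := by
    rw [hW, ← finprod_Ioi_eq k (fun i j => (L i - L j : ℕ)), natAbs_prod]
    apply Finset.prod_congr rfl
    intro i _
    rw [natAbs_prod]
    apply Finset.prod_congr rfl
    intro j hj
    simp only [Finset.mem_Ioi] at hj
    have hlt : (i : ℕ) < (j : ℕ) := by rwa [Fin.lt_iff_val_lt_val] at hj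
    have hle : L (j : ℕ) ≤ L (i : ℕ) := hanti i j hlt j.isLt
    have heq : ((L (j : ℕ) : ℤ) - (L (i : ℕ) : ℤ))
        = -(((L (i : ℕ) - L (j : ℕ) : ℕ)) : ℤ) := by
      push_cast [Nat.cast_sub hle]
      ring
    rw [heq, Int.natAbs_neg, Int.natAbs_natCast]
  have hdvdZ : ((∏ i ∈ range k, (L i)! : ℕ) : ℤ) ∣ (n ! : ℤ) * W := ⟨z, by
    rw [← hZeq]; push_cast; ring⟩
  have hfin := Int.natAbs_dvd_natAbs.mpr hdvdZ
  rwa [Int.natAbs_mul, Int.natAbs_natCast, Int.natAbs_natCast, hWabs] at hfin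

/-! ### Young diagram combinatorics -/

def nrows (μ : YoungDiagram) : ℕ := μ.colLen 0

def L (μ : YoungDiagram) (i : ℕ) : ℕ := μ.rowLen i + (nrows μ - 1 - i)

lemma L_strict_anti {μ : YoungDiagram} {i m : ℕ} (him : i < m) (hm : m < nrows μ) :
    L μ m < L μ i := by
  have h1 : μ.rowLen m ≤ μ.rowLen i := μ.rowLen_anti i m him.le
  unfold L
  omega

lemma colLen_le_nrows (μ : YoungDiagram) (j : ℕ) : μ.colLen j ≤ nrows μ :=
  μ.colLen_anti 0 j (Nat.zero_le j)

lemma lt_colLen_of_lt_rowLen {μ : YoungDiagram} {i j : ℕ} (h : j < μ.rowLen i) :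
    i < μ.colLen j :=
  YoungDiagram.mem_iff_lt_colLen.mp (YoungDiagram.mem_iff_lt_rowLen.mpr h)

def c (μ : YoungDiagram) (j : ℕ) : ℕ := j + (nrows μ - μ.colLen j)

lemma c_strict_mono {μ : YoungDiagram} {j j' : ℕ} (h : j < j') : c μ j < c μ j' := by
  have h1 : μ.colLen j' ≤ μ.colLen j := μ.colLen_anti j j' h.le
  have h2 := colLen_le_nrows μ j
  have h3 := colLen_le_nrows μ j'
  unfold c
  omega

lemma c_lt_L {μ : YoungDiagram} {i j : ℕ} (hi : i < nrows μ) (hj : j < μ.rowLen i) :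
    c μ j < L μ i := by
  have h1 : i < μ.colLen j := lt_colLen_of_lt_rowLen hj
  have h2 := colLen_le_nrows μ j
  unfold c L
  omega

lemma hook_eq {μ : YoungDiagram} {i j : ℕ} (hi : i < nrows μ) (hj : j < μ.rowLen i) :
    μ.hookLength (i, j) = L μ i - c μ j := by
  have h1 : i < μ.colLen j := lt_colLen_of_lt_rowLen hj
  have h2 := colLen_le_nrows μ j
  unfold YoungDiagram.hookLength L c
  simp only
  omega

lemma c_ne_L {μ : YoungDiagram} {i j m : ℕ} (hj : j < μ.rowLen i) (hm : m < nrows μ) :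
    c μ j ≠ L μ m := by
  have h2 := colLen_le_nrows μ j
  by_cases hc : (m, j) ∈ μ
  · have h3 : j < μ.rowLen m := YoungDiagram.mem_iff_lt_rowLen.mp hc
    have h4 : m < μ.colLen j := YoungDiagram.mem_iff_lt_colLen.mp hc
    unfold c L
    omega
  · have h3 : ¬ j < μ.rowLen m := fun h => hc (YoungDiagram.mem_iff_lt_rowLen.mpr h)
    have h4 : ¬ m < μ.colLen j := fun h => hc (YoungDiagram.mem_iff_lt_colLen.mpr h)
    unfold c L
    omega

lemma injA {μ : YoungDiagram} {i : ℕ} (hi : i < nrows μ) :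
    Set.InjOn (fun j => L μ i - c μ j) (range (μ.rowLen i)) := by
  intro a ha b hb hab
  simp only [Finset.coe_range, Set.mem_Iio] at ha hb
  simp only at hab
  have h1 := c_lt_L hi ha
  have h2 := c_lt_L hi hb
  by_contra hne
  rcases Nat.lt_or_ge a b with h | h
  · have := c_strict_mono (μ := μ) h; omega
  · have := c_strict_mono (μ := μ) (show b < a by omega); omega

lemma injB {μ : YoungDiagram} {i : ℕ} :
    Set.InjOn (fun m => L μ i - L μ m) (Ioo i (nrows μ)) := by
  intro a ha b hb hab
  simp only [Finset.coe_Ioo, Set.mem_Ioo] at ha hb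
  simp only at hab
  have h1 := L_strict_anti ha.1 ha.2
  have h2 := L_strict_anti hb.1 hb.2
  by_contra hne
  rcases Nat.lt_or_ge a b with h | h
  · have := L_strict_anti (μ := μ) h hb.2; omega
  · have := L_strict_anti (μ := μ) (show b < a by omega) ha.2; omega

theorem row_hooks {μ : YoungDiagram} {i : ℕ} (hi : i < nrows μ) :
    (∏ j ∈ range (μ.rowLen i), μ.hookLength (i, j))
      * (∏ m ∈ Ioo i (nrows μ), (L μ i - L μ m)) = (L μ i)! := by
  classical
  set A : Finset ℕ := (range (μ.rowLen i)).image (fun j => L μ i - c μ j) with hA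
  set B : Finset ℕ := (Ioo i (nrows μ)).image (fun m => L μ i - L μ m) with hB
  have hcardA : A.card = μ.rowLen i := by
    rw [hA, Finset.card_image_of_injOn (injA hi), Finset.card_range]
  have hcardB : B.card = nrows μ - i - 1 := by
    rw [hB, Finset.card_image_of_injOn injB, Nat.card_Ioo]
  have hdisj : Disjoint A B := by
    rw [Finset.disjoint_left]
    intro x hxA hxB
    simp only [hA, hB, Finset.mem_image, Finset.mem_range, Finset.mem_Ioo] at hxA hxB
    obtain ⟨j, hj, hj2⟩ := hxA
    obtain ⟨m, hm, hm2⟩ := hxB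
    have h1 := c_lt_L hi hj
    have h2 := L_strict_anti hm.1 hm.2
    have h3 := c_ne_L hj hm.2
    omega
  have hsub : A ∪ B ⊆ Icc 1 (L μ i) := by
    intro x hx
    rcases Finset.mem_union.mp hx with hx | hx
    · simp only [hA, Finset.mem_image, Finset.mem_range] at hx
      obtain ⟨j, hj, rfl⟩ := hx
      have := c_lt_L hi hj
      simp only [Finset.mem_Icc]; omega
    · simp only [hB, Finset.mem_image, Finset.mem_Ioo] at hx
      obtain ⟨m, hm, rfl⟩ := hx
      have := L_strict_anti hm.1 hm.2
      simp only [Finset.mem_Icc]; omega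
  have hunion : A ∪ B = Icc 1 (L μ i) := by
    apply Finset.eq_of_subset_of_card_le hsub
    rw [Nat.card_Icc, Finset.card_union_of_disjoint hdisj, hcardA, hcardB]
    unfold L
    omega
  have hprodA : ∏ x ∈ A, x = ∏ j ∈ range (μ.rowLen i), μ.hookLength (i, j) := by
    rw [hA, Finset.prod_image (injA hi)]
    exact Finset.prod_congr rfl fun j hj =>
      (hook_eq hi (Finset.mem_range.mp hj)).symm
  have hprodB : ∏ x ∈ B, x = ∏ m ∈ Ioo i (nrows μ), (L μ i - L μ m) := by
    rw [hB, Finset.prod_image injB]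
  calc (∏ j ∈ range (μ.rowLen i), μ.hookLength (i, j))
      * (∏ m ∈ Ioo i (nrows μ), (L μ i - L μ m))
      = (∏ x ∈ A, x) * (∏ x ∈ B, x) := by rw [hprodA, hprodB]
    _ = ∏ x ∈ A ∪ B, x := (Finset.prod_union hdisj).symm
    _ = (L μ i)! := by rw [hunion, prod_Icc_id]

lemma cells_eq (μ : YoungDiagram) : μ.cells = (range (nrows μ)).biUnion
    (fun i => {i} ×ˢ range (μ.rowLen i)) := by
  ext ⟨i, j⟩
  simp only [Finset.mem_biUnion, Finset.mem_range, Finset.mem_product, Finset.mem_singleton,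
    YoungDiagram.mem_cells]
  constructor
  · intro h
    exact ⟨i, by
      show i < μ.colLen 0
      rw [← YoungDiagram.mem_iff_lt_colLen]
      exact μ.up_left_mem (le_refl i) (Nat.zero_le j) h, ⟨rfl,
      YoungDiagram.mem_iff_lt_rowLen.mp h⟩⟩
  · rintro ⟨a, _, rfl, hj⟩
    exact YoungDiagram.mem_iff_lt_rowLen.mpr hj

lemma rows_pairwise_disjoint (μ : YoungDiagram) : ∀ a ∈ range (nrows μ), ∀ b ∈ range (nrows μ),
    a ≠ b → Disjoint (({a} : Finset ℕ) ×ˢ range (μ.rowLen a)) ({b} ×ˢ range (μ.rowLen b)) := by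
  intro a _ b _ hab
  simp only [Finset.disjoint_left]
  rintro ⟨x, y⟩ hx hy
  simp only [Finset.mem_product, Finset.mem_singleton] at hx hy
  exact hab (hx.1 ▸ hy.1 ▸ rfl)

theorem prod_cells (μ : YoungDiagram) {M : Type*} [CommMonoid M] (f : ℕ × ℕ → M) :
    ∏ c ∈ μ.cells, f c
      = ∏ i ∈ range (nrows μ), ∏ j ∈ range (μ.rowLen i), f (i, j) := by
  rw [cells_eq, Finset.prod_biUnion (rows_pairwise_disjoint μ)]
  apply Finset.prod_congr rfl
  intro i _
  rw [Finset.prod_product]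
  simp

theorem card_eq_sum (μ : YoungDiagram) :
    μ.card = ∑ i ∈ range (nrows μ), μ.rowLen i := by
  show μ.cells.card = _
  rw [cells_eq, Finset.card_biUnion (rows_pairwise_disjoint μ)]
  apply Finset.sum_congr rfl
  intro i _
  simp

lemma hook_pos {μ : YoungDiagram} {c : ℕ × ℕ} (hc : c ∈ μ.cells) :
    0 < μ.hookLength c := by
  obtain ⟨i, j⟩ := c
  rw [YoungDiagram.mem_cells] at hc
  have h1 : j < μ.rowLen i := YoungDiagram.mem_iff_lt_rowLen.mp hc
  have h2 : i < μ.colLen j := YoungDiagram.mem_iff_lt_colLen.mp hc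
  unfold YoungDiagram.hookLength
  simp only
  omega

/-- Integrality part of the hook length formula. -/
theorem hookProd_dvd (μ : YoungDiagram) :
    (∏ c ∈ μ.cells, μ.hookLength c) ∣ (μ.card)! := by
  have hanti : ∀ i j : ℕ, i < j → j < nrows μ → L μ j ≤ L μ i :=
    fun i j hij hj => (L_strict_anti hij hj).le
  have hsum : ∑ i ∈ range (nrows μ), L μ i = μ.card + ∑ i ∈ range (nrows μ), i := by
    unfold L
    rw [Finset.sum_add_distrib, card_eq_sum μ]
    congr 1
    exact Finset.sum_range_reflect (fun i => i) (nrows μ)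
  have hkey := key_dvd (L μ) (nrows μ) μ.card hanti hsum
  have hfac : ∏ i ∈ range (nrows μ), (L μ i)!
      = (∏ c ∈ μ.cells, μ.hookLength c)
        * ∏ i ∈ range (nrows μ), ∏ m ∈ Ioo i (nrows μ), (L μ i - L μ m) := by
    rw [prod_cells μ (μ.hookLength), ← Finset.prod_mul_distrib]
    apply Finset.prod_congr rfl
    intro i hi
    exact (row_hooks (Finset.mem_range.mp hi)).symm
  rw [hfac] at hkey
  have hVpos : 0 < ∏ i ∈ range (nrows μ), ∏ m ∈ Ioo i (nrows μ), (L μ i - L μ m) := by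
    apply Finset.prod_pos
    intro i hi
    apply Finset.prod_pos
    intro m hm
    simp only [Finset.mem_range] at hi
    simp only [Finset.mem_Ioo] at hm
    have := L_strict_anti hm.1 hm.2
    omega
  exact (Nat.mul_dvd_mul_iff_right hVpos).mp hkey

end HookAux

open HookAux

set_option maxHeartbeats 1000000 in
/-- Let `μ` be a Young diagram with `n` cells, `d` the length of its first row, and `μ'` the
diagram obtained from `μ` by deleting its first row.  Then
`dim π_μ = dim π_{μ'} · C(n,d) · ∏_{i=1}^{d} (1 + (c_i - 1)/i)⁻¹`,
where `c_i` is the length of the `(d-i+1)`-th column of `μ` (so `c_i = colLen (d-i)` in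
0-indexed terms). -/
theorem stmt1 (μ μ' : YoungDiagram) (n d : ℕ) (hn : μ.card = n) (hd : d = μ.rowLen 0)
    (hdel : ∀ i j : ℕ, (i + 1, j) ∈ μ ↔ (i, j) ∈ μ') :
    (μ.dimIrrep : ℝ) =
      (μ'.dimIrrep : ℝ) * (n.choose d : ℝ) *
        ∏ i ∈ Finset.Icc 1 d, (1 + ((μ.colLen (d - i) : ℝ) - 1) / (i : ℝ))⁻¹ := by
  classical
  have hrow' : ∀ i, μ'.rowLen i = μ.rowLen (i + 1) := by
    intro i
    apply eq_of_lt_iff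
    intro j
    rw [← YoungDiagram.mem_iff_lt_rowLen, ← YoungDiagram.mem_iff_lt_rowLen, ← hdel]
  have hcol' : ∀ j, μ'.colLen j = μ.colLen j - 1 := by
    intro j
    apply eq_of_lt_iff
    intro i
    rw [← YoungDiagram.mem_iff_lt_colLen, ← hdel, YoungDiagram.mem_iff_lt_colLen]
    omega
  rcases Nat.eq_zero_or_pos d with hd0 | hd1
  · -- degenerate case : μ is empty
    subst hd0
    have hr0 : μ.rowLen 0 = 0 := hd.symm
    have hk : nrows μ = 0 := by
      unfold nrows
      by_contra h
      have : (0, 0) ∈ μ := YoungDiagram.mem_iff_lt_colLen.mpr (by omega)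
      rw [YoungDiagram.mem_iff_lt_rowLen, hr0] at this
      omega
    have hcard : μ.card = 0 := by rw [card_eq_sum, hk]; simp
    have hn0 : n = 0 := by omega
    have hk' : nrows μ' = 0 := by
      show μ'.colLen 0 = 0
      rw [hcol' 0]
      unfold nrows at hk
      omega
    have hcard' : μ'.card = 0 := by rw [card_eq_sum, hk']; simp
    have hcells : μ.cells = ∅ := Finset.card_eq_zero.mp hcard
    have hcells' : μ'.cells = ∅ := Finset.card_eq_zero.mp hcard'
    unfold YoungDiagram.dimIrrep
    rw [hcard, hcard', hcells, hcells', hn0]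
    simp
  -- main case
  have hd' : μ.rowLen 0 = d := hd.symm
  have hkpos : 0 < nrows μ := by
    show 0 < μ.colLen 0
    rw [← YoungDiagram.mem_iff_lt_colLen, YoungDiagram.mem_iff_lt_rowLen]
    omega
  obtain ⟨k0, hk0⟩ : ∃ k0, nrows μ = k0 + 1 := ⟨nrows μ - 1, by omega⟩
  have hk' : nrows μ' = k0 := by
    show μ'.colLen 0 = k0
    rw [hcol' 0]
    show nrows μ - 1 = k0
    omega
  have hhook' : ∀ i j : ℕ, μ'.hookLength (i, j) = μ.hookLength (i + 1, j) := by
    intro i j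
    unfold YoungDiagram.hookLength
    simp only
    rw [hrow', hcol']
    omega
  -- cardinalities
  have hsum0 : μ.card = d + μ'.card := by
    rw [card_eq_sum μ, card_eq_sum μ', hk0, hk']
    rw [Finset.sum_range_succ' (fun i => μ.rowLen i) k0]
    rw [hd', Finset.sum_congr rfl (fun i (_ : i ∈ range k0) => (hrow' i).symm)]
    exact Nat.add_comm _ _
  have hdn : d ≤ n := by omega
  have hcard' : μ'.card = n - d := by omega
  -- hook product split
  have hHsplit : (∏ c ∈ μ.cells, μ.hookLength c)
      = (∏ j ∈ range d, μ.hookLength (0, j)) * (∏ c ∈ μ'.cells, μ'.hookLength c) := by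
    rw [prod_cells μ, prod_cells μ', hk', hk0]
    rw [Finset.prod_range_succ'
      (fun i => ∏ j ∈ range (μ.rowLen i), μ.hookLength (i, j)) k0]
    rw [hd', mul_comm]
    congr 1
    apply Finset.prod_congr rfl
    intro i _
    rw [hrow' i]
    exact (Finset.prod_congr rfl (fun j _ => (hhook' i j))).symm
  -- first row hooks
  have hR0 : (∏ j ∈ range d, μ.hookLength (0, j))
      = ∏ i ∈ Icc 1 d, (i + μ.colLen (d - i) - 1) := by
    rw [← Finset.prod_range_reflect (fun j => μ.hookLength (0, j)) d]
    rw [show Finset.Icc 1 d = Finset.Ico 1 (d + 1) from by rw [Finset.Ico_add_one_right_eq_Icc]]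
    rw [Finset.prod_Ico_eq_prod_range]
    simp only [Nat.add_sub_cancel]
    apply Finset.prod_congr rfl
    intro j hj
    have hj' : j < d := Finset.mem_range.mp hj
    have hmem : (0, d - 1 - j) ∈ μ := YoungDiagram.mem_iff_lt_rowLen.mpr (by omega)
    have hcl : 0 < μ.colLen (d - 1 - j) := YoungDiagram.mem_iff_lt_colLen.mp hmem
    unfold YoungDiagram.hookLength
    simp only
    rw [hd', show d - (1 + j) = d - 1 - j from by omega]
    omega
  -- divisibility and positivity
  have hHpos : 0 < ∏ c ∈ μ.cells, μ.hookLength c :=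
    Finset.prod_pos fun c hc => hook_pos hc
  have hH'pos : 0 < ∏ c ∈ μ'.cells, μ'.hookLength c :=
    Finset.prod_pos fun c hc => hook_pos hc
  have hdvd : (∏ c ∈ μ.cells, μ.hookLength c) ∣ n ! := hn ▸ hookProd_dvd μ
  have hdvd' : (∏ c ∈ μ'.cells, μ'.hookLength c) ∣ (n - d)! := hcard' ▸ hookProd_dvd μ'
  -- cast the dimensions
  have h1 : (μ.dimIrrep : ℝ) = (n ! : ℝ) / ((∏ c ∈ μ.cells, μ.hookLength c : ℕ) : ℝ) := by
    unfold YoungDiagram.dimIrrep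
    rw [hn, Nat.cast_div hdvd (by exact_mod_cast hHpos.ne')]
  have h2 : (μ'.dimIrrep : ℝ)
      = ((n - d)! : ℝ) / ((∏ c ∈ μ'.cells, μ'.hookLength c : ℕ) : ℝ) := by
    unfold YoungDiagram.dimIrrep
    rw [hcard', Nat.cast_div hdvd' (by exact_mod_cast hH'pos.ne')]
  -- the inverse product
  have hclpos : ∀ i ∈ Icc 1 d, 0 < μ.colLen (d - i) := by
    intro i hi
    simp only [Finset.mem_Icc] at hi
    exact YoungDiagram.mem_iff_lt_colLen.mp
      (YoungDiagram.mem_iff_lt_rowLen.mpr (show d - i < μ.rowLen 0 by omega))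
  have hprodinv : (∏ i ∈ Finset.Icc 1 d, (1 + ((μ.colLen (d - i) : ℝ) - 1) / (i : ℝ))⁻¹)
      = (d ! : ℝ) / ((∏ i ∈ Icc 1 d, (i + μ.colLen (d - i) - 1) : ℕ) : ℝ) := by
    have hstep : ∀ i ∈ Icc 1 d,
        (1 + ((μ.colLen (d - i) : ℝ) - 1) / (i : ℝ))⁻¹
          = (i : ℝ) / (((i + μ.colLen (d - i) - 1 : ℕ)) : ℝ) := by
      intro i hi
      simp only [Finset.mem_Icc] at hi
      have hc1 : 1 ≤ μ.colLen (d - i) := hclpos i (by simp [Finset.mem_Icc]; omega)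
      have hi0 : (0 : ℝ) < (i : ℝ) := by exact_mod_cast hi.1
      have hcast : (((i + μ.colLen (d - i) - 1 : ℕ)) : ℝ)
          = (i : ℝ) + ((μ.colLen (d - i) : ℝ) - 1) := by
        rw [show i + μ.colLen (d - i) - 1 = i + (μ.colLen (d - i) - 1) from by omega]
        push_cast [Nat.cast_sub hc1]
        ring
      rw [hcast]
      rw [show (1 : ℝ) + ((μ.colLen (d - i) : ℝ) - 1) / (i : ℝ)
          = ((i : ℝ) + ((μ.colLen (d - i) : ℝ) - 1)) / (i : ℝ) from by field_simp]
      rw [inv_div]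
    rw [Finset.prod_congr rfl hstep, Finset.prod_div_distrib]
    rw [Nat.cast_prod]
    congr 1
    rw [← Nat.cast_prod, prod_Icc_id]
  -- final computation
  rw [h1, h2, hHsplit, hR0, hprodinv]
  have hfact : (n ! : ℝ) = (n.choose d : ℝ) * (d ! : ℝ) * ((n - d)! : ℝ) := by
    exact_mod_cast (Nat.choose_mul_factorial_mul_factorial hdn).symm
  have hPpos : 0 < ∏ i ∈ Icc 1 d, (i + μ.colLen (d - i) - 1) := by
    rw [← hR0]
    refine Finset.prod_pos fun j hj => ?_
    have hjd := Finset.mem_range.mp hj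
    have hmem : ((0 : ℕ), j) ∈ μ := YoungDiagram.mem_iff_lt_rowLen.mpr (by omega)
    exact hook_pos ((μ.mem_cells _).mpr hmem)
  have hP0 : ((∏ i ∈ Icc 1 d, (i + μ.colLen (d - i) - 1) : ℕ) : ℝ) ≠ 0 := by
    exact_mod_cast hPpos.ne'
  have hH'0 : ((∏ c ∈ μ'.cells, μ'.hookLength c : ℕ) : ℝ) ≠ 0 := by
    exact_mod_cast hH'pos.ne'
  rw [Nat.cast_mul]
  field_simp
  rw [hfact]
  ring
end

section
/- Let μ be a Young diagram with n cells whose first row has length d, and let c_1, ..., c_d be the lengths of its columns (in reverse order). Then ∏_{i=1}^{d} (1 + (c_i - 1)/i) ≤ (n/d)^d, and consequently dim π_μ ≥ C(n,d) · (d/n)^d. -/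
namespace StmtAux

open Finset YoungDiagram Nat

/-- Product of all hook lengths. -/
def hprod (μ : YoungDiagram) : ℕ := ∏ c ∈ μ.cells, μ.hookLength c

/-- The diagram obtained by deleting the top row. -/
noncomputable def eraseTop (μ : YoungDiagram) : YoungDiagram where
  cells := μ.cells.preimage (fun c => (c.1 + 1, c.2))
    (by intro a _ b _ h; simpa [Prod.ext_iff] using h)
  isLowerSet := by
    rintro ⟨a, b⟩ ⟨c, d⟩ ⟨h1, h2⟩ hm
    simp only [Finset.coe_preimage, Set.mem_preimage, Finset.mem_coe, mem_cells, Finset.mem_preimage] at hm ⊢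
    exact (Finset.mem_preimage (f := fun c : ℕ × ℕ => (c.1 + 1, c.2))).mpr
      (μ.up_left_mem (show c + 1 ≤ a + 1 by simpa using h1) h2 (show (a + 1, b) ∈ μ from
      (Finset.mem_preimage (f := fun c : ℕ × ℕ => (c.1 + 1, c.2))).mp hm))

@[simp] lemma mem_eraseTop {μ : YoungDiagram} {i j : ℕ} :
    (i, j) ∈ eraseTop μ ↔ (i + 1, j) ∈ μ := by
  change (i, j) ∈ (eraseTop μ).cells ↔ _
  exact Finset.mem_preimage (f := fun c : ℕ × ℕ => (c.1 + 1, c.2))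
    (hf := by intro a _ b _ h; simpa [Prod.ext_iff] using h)

lemma nat_eq_of_lt_iff {a b : ℕ} (h : ∀ t, t < a ↔ t < b) : a = b := by
  rcases lt_trichotomy a b with h' | h' | h'
  · exact absurd ((h a).mpr h') (lt_irrefl a)
  · exact h'
  · exact absurd ((h b).mp h') (lt_irrefl b)

lemma rowLen_eraseTop (μ : YoungDiagram) (i : ℕ) :
    (eraseTop μ).rowLen i = μ.rowLen (i + 1) := by
  apply nat_eq_of_lt_iff
  intro t
  rw [← mem_iff_lt_rowLen, ← mem_iff_lt_rowLen, mem_eraseTop]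

lemma colLen_eraseTop (μ : YoungDiagram) (j : ℕ) :
    (eraseTop μ).colLen j = μ.colLen j - 1 := by
  apply nat_eq_of_lt_iff
  intro t
  rw [← mem_iff_lt_colLen, mem_eraseTop, mem_iff_lt_colLen]
  omega

lemma hookLength_eraseTop (μ : YoungDiagram) (c : ℕ × ℕ) :
    (eraseTop μ).hookLength c = μ.hookLength (c.1 + 1, c.2) := by
  obtain ⟨i, j⟩ := c
  simp only [YoungDiagram.hookLength, rowLen_eraseTop, colLen_eraseTop]
  omega

lemma cells_eq_union (μ : YoungDiagram) :
    μ.cells = μ.row 0 ∪ (eraseTop μ).cells.image (fun c => (c.1 + 1, c.2)) := by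
  ext ⟨i, j⟩
  simp only [Finset.mem_union, Finset.mem_image, mem_cells, mem_row_iff]
  constructor
  · intro h
    cases i with
    | zero => exact Or.inl ⟨h, rfl⟩
    | succ k => exact Or.inr ⟨(k, j), by simpa using h, rfl⟩
  · rintro (⟨h, _⟩ | ⟨⟨a, b⟩, hm, heq⟩)
    · exact h
    · obtain ⟨rfl, rfl⟩ : a + 1 = i ∧ b = j := by simpa [Prod.ext_iff] using heq
      simpa using hm

lemma disjoint_row0 (μ : YoungDiagram) :
    Disjoint (μ.row 0) ((eraseTop μ).cells.image (fun c => (c.1 + 1, c.2))) := by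
  rw [Finset.disjoint_left]
  rintro ⟨i, j⟩ h1 h2
  simp only [mem_row_iff] at h1
  simp only [Finset.mem_image] at h2
  obtain ⟨⟨a, b⟩, _, heq⟩ := h2
  have : a + 1 = i := by
    have := heq
    simp [Prod.ext_iff] at this
    exact this.1
  omega

lemma shift_injOn : Set.InjOn (fun c : ℕ × ℕ => (c.1 + 1, c.2)) ↑((eraseTop μ).cells) := by
  intro a _ b _ h
  simpa [Prod.ext_iff] using h

lemma card_split (μ : YoungDiagram) :
    μ.card = μ.rowLen 0 + (eraseTop μ).card := by
  change μ.cells.card = _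
  rw [cells_eq_union μ, Finset.card_union_of_disjoint (disjoint_row0 μ),
    Finset.card_image_of_injOn shift_injOn, rowLen_eq_card]

lemma hprod_split (μ : YoungDiagram) :
    hprod μ = (∏ j ∈ range (μ.rowLen 0), μ.hookLength (0, j)) * hprod (eraseTop μ) := by
  unfold hprod
  rw [cells_eq_union μ, Finset.prod_union (disjoint_row0 μ),
    Finset.prod_image shift_injOn]
  congr 1
  · rw [row_eq_prod, Finset.singleton_product, Finset.prod_map]
    rfl
  · exact Finset.prod_congr rfl fun c _ => (hookLength_eraseTop μ c).symm


lemma hook_row0 (μ : YoungDiagram) (j : ℕ) :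
    μ.hookLength (0, j) = μ.rowLen 0 - j + μ.colLen j - 1 := by
  simp [YoungDiagram.hookLength]

lemma colLen_pos {μ : YoungDiagram} {j : ℕ} (hj : j < μ.rowLen 0) : 0 < μ.colLen j := by
  rw [← mem_iff_lt_colLen]
  exact mem_iff_lt_rowLen.mpr hj

lemma card_eq_sum_colLens (μ : YoungDiagram) :
    μ.card = ∑ j ∈ range (μ.rowLen 0), μ.colLen j := by
  change μ.cells.card = _
  rw [Finset.card_eq_sum_card_fiberwise (f := Prod.snd) (t := range (μ.rowLen 0))]
  · apply Finset.sum_congr rfl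
    intro j _
    rw [colLen_eq_card, YoungDiagram.col]
  · rintro ⟨i, j⟩ hc
    rw [Finset.mem_coe, mem_cells] at hc
    rw [Finset.mem_coe, Finset.mem_range, ← mem_iff_lt_rowLen]
    exact μ.up_left_mem (Nat.zero_le _) le_rfl hc

lemma rowLen_le_card (μ : YoungDiagram) : μ.rowLen 0 ≤ μ.card := by
  rw [card_eq_sum_colLens]
  calc μ.rowLen 0 = ∑ _j ∈ range (μ.rowLen 0), 1 := by simp
  _ ≤ _ := Finset.sum_le_sum fun j hj => colLen_pos (Finset.mem_range.mp hj)

/-- Counting: the first `j+1` columns all have length `≥ colLen j`, the remaining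
`d-1-j` columns are nonempty. -/
lemma key_count (μ : YoungDiagram) {j : ℕ} (hj : j < μ.rowLen 0) :
    (μ.rowLen 0 - 1 - j) + (j + 1) * μ.colLen j ≤ μ.card := by
  set d := μ.rowLen 0 with hd
  rw [card_eq_sum_colLens]
  have hj' : j + 1 ≤ d := hj
  have hsplit := Finset.sum_Ico_consecutive (m := 0) μ.colLen (Nat.zero_le (j+1)) hj'
  rw [Finset.range_eq_Ico, ← hsplit, ← Finset.range_eq_Ico]
  have h1 : (j + 1) * μ.colLen j ≤ ∑ t ∈ range (j+1), μ.colLen t := by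
    calc (j + 1) * μ.colLen j = ∑ _t ∈ range (j+1), μ.colLen j := by
          rw [Finset.sum_const, Finset.card_range, smul_eq_mul]
    _ ≤ _ := Finset.sum_le_sum fun t ht => μ.colLen_anti t j (by
          have := Finset.mem_range.mp ht; omega)
  have h2 : d - 1 - j ≤ ∑ t ∈ Ico (j+1) d, μ.colLen t := by
    calc d - 1 - j = (Ico (j+1) d).card := by rw [Nat.card_Ico]; omega
    _ = ∑ _t ∈ Ico (j+1) d, 1 := by simp
    _ ≤ _ := Finset.sum_le_sum fun t ht => colLen_pos (Finset.mem_Ico.mp ht).2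
  omega

/-- `hook(0,j) ≤ n - j`, in additive form. -/
lemma hook_bound1 (μ : YoungDiagram) {j : ℕ} (hj : j < μ.rowLen 0) :
    μ.hookLength (0, j) + j ≤ μ.card := by
  have hk := key_count μ hj
  have hc := colLen_pos hj
  rw [hook_row0]
  have hmul : j * 1 ≤ j * μ.colLen j := Nat.mul_le_mul_left j hc
  have h5 : (j + 1) * μ.colLen j = j * μ.colLen j + μ.colLen j := by ring
  omega

lemma arith_bound {d j c n : ℕ} (hj : j < d) (hc : 1 ≤ c)
    (hk : (d - 1 - j) + (j + 1) * c ≤ n) :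
    d * (d - j + c - 1) ≤ (d - j) * n := by
  obtain ⟨i, rfl⟩ : ∃ i, d = j + i + 1 := ⟨d - j - 1, by omega⟩
  obtain ⟨c', rfl⟩ : ∃ c', c = c' + 1 := ⟨c - 1, by omega⟩
  have h1 : j + i + 1 - 1 - j = i := by omega
  have h2 : j + i + 1 - j = i + 1 := by omega
  rw [h1] at hk
  rw [h2]
  have h3 : i + 1 + (c' + 1) - 1 = i + c' + 1 := by omega
  rw [h3]
  calc (j + i + 1) * (i + c' + 1)
      ≤ (i + 1) * (i + (j + 1) * (c' + 1)) := by
        have hid : (j + i + 1) * (i + c' + 1) + i * j * c'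
            = (i + 1) * (i + (j + 1) * (c' + 1)) := by ring
        omega
  _ ≤ (i + 1) * n := Nat.mul_le_mul_left _ (by omega)

/-- The key factorwise bound `d * hook(0,j) ≤ (d-j) * n`. -/
lemma hook_bound2 (μ : YoungDiagram) {j : ℕ} (hj : j < μ.rowLen 0) :
    μ.rowLen 0 * μ.hookLength (0, j) ≤ (μ.rowLen 0 - j) * μ.card := by
  rw [hook_row0]
  exact arith_bound hj (colLen_pos hj) (key_count μ hj)


lemma hookLength_pos {μ : YoungDiagram} {c : ℕ × ℕ} (hc : c ∈ μ) : 0 < μ.hookLength c := by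
  obtain ⟨i, j⟩ := c
  have h1 : j < μ.rowLen i := mem_iff_lt_rowLen.mp hc
  have h2 : i < μ.colLen j := mem_iff_lt_colLen.mp hc
  simp only [YoungDiagram.hookLength]
  omega

lemma hprod_pos (μ : YoungDiagram) : 0 < hprod μ :=
  Finset.prod_pos fun c hc => hookLength_pos (mem_cells c |>.mp hc)

/-- Product of the first-row hooks. -/
def P (μ : YoungDiagram) : ℕ := ∏ j ∈ range (μ.rowLen 0), μ.hookLength (0, j)

lemma hprod_eq (μ : YoungDiagram) : hprod μ = P μ * hprod (eraseTop μ) := hprod_split μ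

lemma P_le_descFactorial (μ : YoungDiagram) :
    P μ ≤ Nat.descFactorial μ.card (μ.rowLen 0) := by
  rw [Nat.descFactorial_eq_prod_range]
  apply Finset.prod_le_prod'
  intro j hj
  have := hook_bound1 μ (Finset.mem_range.mp hj)
  omega

lemma pow_mul_P_le (μ : YoungDiagram) :
    μ.rowLen 0 ^ μ.rowLen 0 * P μ ≤ (μ.rowLen 0)! * μ.card ^ μ.rowLen 0 := by
  set d := μ.rowLen 0 with hd
  have h1 : d ^ d * P μ = ∏ j ∈ range d, (d * μ.hookLength (0, j)) := by
    rw [Finset.prod_mul_distrib, Finset.prod_const, Finset.card_range, P]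
  have h2 : d ! * μ.card ^ d = ∏ j ∈ range d, ((d - j) * μ.card) := by
    rw [Finset.prod_mul_distrib, Finset.prod_const, Finset.card_range]
    congr 1
    rw [← Nat.descFactorial_self, Nat.descFactorial_eq_prod_range]
  rw [h1, h2]
  exact Finset.prod_le_prod' fun j hj => hook_bound2 μ (Finset.mem_range.mp hj)

lemma card_eraseTop (μ : YoungDiagram) : (eraseTop μ).card = μ.card - μ.rowLen 0 := by
  have := card_split μ; omega

lemma rowLen_pos_of_card {μ : YoungDiagram} (h : 0 < μ.card) : 0 < μ.rowLen 0 := by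
  rcases Nat.eq_zero_or_pos (μ.rowLen 0) with h0 | h1
  · exfalso
    have hs := card_eq_sum_colLens μ
    rw [h0, Finset.range_zero, Finset.sum_empty] at hs
    omega
  · exact h1

/-- Lemma A: the product of all hook lengths is at most `card!`. -/
lemma hprod_le_factorial (μ : YoungDiagram) : hprod μ ≤ (μ.card)! := by
  obtain ⟨N, hN⟩ : ∃ N, μ.card ≤ N := ⟨μ.card, le_rfl⟩
  induction N generalizing μ with
  | zero =>
    have h0 : μ.card = 0 := Nat.le_zero.mp hN
    have hc : μ.cells = ∅ := Finset.card_eq_zero.mp h0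
    simp [hprod, hc, h0]
  | succ N ih =>
    rcases Nat.eq_zero_or_pos μ.card with h0 | hpos
    · have hc : μ.cells = ∅ := Finset.card_eq_zero.mp h0
      simp [hprod, hc, h0]
    · have hd : 0 < μ.rowLen 0 := rowLen_pos_of_card hpos
      have hdn : μ.rowLen 0 ≤ μ.card := rowLen_le_card μ
      have hcard' : (eraseTop μ).card = μ.card - μ.rowLen 0 := card_eraseTop μ
      have hih : hprod (eraseTop μ) ≤ ((eraseTop μ).card)! := ih _ (by omega)
      calc hprod μ = P μ * hprod (eraseTop μ) := hprod_eq μ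
      _ ≤ Nat.descFactorial μ.card (μ.rowLen 0) * ((eraseTop μ).card)! :=
          Nat.mul_le_mul (P_le_descFactorial μ) hih
      _ = (μ.card)! := by
          rw [hcard', mul_comm]
          exact Nat.factorial_mul_descFactorial hdn


/-- Columns within the first row are nonempty; if `(1,0) ∉ μ` they have length exactly 1. -/
lemma colLen_eq_one {μ : YoungDiagram} (h : (1, 0) ∉ μ) {j : ℕ} (hj : j < μ.rowLen 0) :
    μ.colLen j = 1 := by
  have h1 : 0 < μ.colLen j := colLen_pos hj
  have h2 : μ.colLen j ≤ 1 := by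
    by_contra hco
    exact h (μ.up_left_mem le_rfl (Nat.zero_le j) (mem_iff_lt_colLen.mpr (by omega)))
  omega

lemma eraseTop_cells_empty {μ : YoungDiagram} (h : (1, 0) ∉ μ) : (eraseTop μ).cells = ∅ := by
  rw [Finset.eq_empty_iff_forall_notMem]
  rintro ⟨i, j⟩ hm
  rw [mem_cells, mem_eraseTop] at hm
  exact h (μ.up_left_mem (by omega) (Nat.zero_le j) hm)

/-- A single-row diagram has hook product `card!`. -/
lemma hprod_single_row {μ : YoungDiagram} (h : (1, 0) ∉ μ) :
    hprod μ = (μ.card)! ∧ μ.card = μ.rowLen 0 := by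
  have hcells := eraseTop_cells_empty h
  have hcard0 : (eraseTop μ).card = 0 := by rw [YoungDiagram.card, hcells]; rfl
  have hcard : μ.card = μ.rowLen 0 := by have := card_split μ; omega
  constructor
  · rw [hprod_eq, hprod]
    rw [hcells, Finset.prod_empty, mul_one, P]
    have hP : ∏ j ∈ range (μ.rowLen 0), μ.hookLength (0, j)
        = ∏ j ∈ range (μ.rowLen 0), (μ.rowLen 0 - j) := by
      apply Finset.prod_congr rfl
      intro j hj
      rw [hook_row0, colLen_eq_one h (Finset.mem_range.mp hj)]
      have := Finset.mem_range.mp hj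
      omega
    rw [hP, ← Nat.descFactorial_eq_prod_range, Nat.descFactorial_self, hcard]
  · exact hcard

/-- A single-column diagram has hook product `card!`. -/
lemma hprod_single_col {μ : YoungDiagram} (h : (0, 1) ∉ μ) : hprod μ = (μ.card)! := by
  obtain ⟨N, hN⟩ : ∃ N, μ.card ≤ N := ⟨μ.card, le_rfl⟩
  induction N generalizing μ with
  | zero =>
    have h0 : μ.card = 0 := Nat.le_zero.mp hN
    have hc : μ.cells = ∅ := Finset.card_eq_zero.mp h0
    simp [hprod, hc, h0]
  | succ N ih =>
    rcases Nat.eq_zero_or_pos μ.card with h0 | hpos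
    · have hc : μ.cells = ∅ := Finset.card_eq_zero.mp h0
      simp [hprod, hc, h0]
    · have hd1 : μ.rowLen 0 = 1 := by
        have h1 : 0 < μ.rowLen 0 := rowLen_pos_of_card hpos
        have h2 : μ.rowLen 0 ≤ 1 := by
          by_contra hco
          exact h (mem_iff_lt_rowLen.mpr (by omega))
        omega
      have hcol0 : μ.colLen 0 = μ.card := by
        have := card_eq_sum_colLens μ
        rw [hd1] at this
        simp at this
        omega
      have hP : P μ = μ.card := by
        rw [P, hd1, Finset.prod_range_one, hook_row0, hd1, hcol0]
        omega
      have herase : (0, 1) ∉ eraseTop μ := by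
        rw [mem_eraseTop]
        intro hco
        exact h (μ.up_left_mem (Nat.zero_le 1) le_rfl hco)
      have hcard' : (eraseTop μ).card = μ.card - 1 := by
        have := card_eraseTop μ; omega
      rw [hprod_eq, hP, ih herase (by omega), hcard']
      obtain ⟨m, hm⟩ : ∃ m, μ.card = m + 1 := ⟨μ.card - 1, by omega⟩
      rw [hm]
      simp [Nat.factorial_succ]


lemma choose_mono_half {m : ℕ} : ∀ {a b : ℕ}, a ≤ b → b ≤ m / 2 → m.choose a ≤ m.choose b := by
  intro a b
  induction b with
  | zero => intro hab _; interval_cases a; rfl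
  | succ k ih =>
    intro hab hb
    rcases Nat.eq_or_lt_of_le hab with h | h
    · rw [h]
    · calc m.choose a ≤ m.choose k := ih (by omega) (by omega)
      _ ≤ m.choose (k + 1) := Nat.choose_le_succ_of_lt_half_left (by omega)

lemma le_choose {m r : ℕ} (h1 : 1 ≤ r) (h2 : r ≤ m - 1) : m ≤ m.choose r := by
  rcases le_or_gt r (m / 2) with hr | hr
  · calc m = m.choose 1 := (Nat.choose_one_right m).symm
    _ ≤ _ := choose_mono_half h1 hr
  · have hrm : r ≤ m := by omega
    rw [← Nat.choose_symm hrm]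
    calc m = m.choose 1 := (Nat.choose_one_right m).symm
    _ ≤ _ := choose_mono_half (by omega) (by omega)

/-- P for a hook-shaped diagram. -/
lemma hook_data {μ : YoungDiagram} (h10 : (1, 0) ∈ μ) (h11 : (1, 1) ∉ μ) :
    P μ = μ.card * (μ.rowLen 0 - 1)! ∧ μ.rowLen 0 + 1 ≤ μ.card := by
  have hd : 0 < μ.rowLen 0 := by
    rw [← mem_iff_lt_rowLen]; exact μ.up_left_mem (Nat.zero_le 1) le_rfl h10
  set d := μ.rowLen 0 with hdd
  have hcolj : ∀ j, 1 ≤ j → j < d → μ.colLen j = 1 := by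
    intro j hj1 hjd
    have h1 : 0 < μ.colLen j := colLen_pos hjd
    have h2 : μ.colLen j ≤ 1 := by
      by_contra hco
      exact h11 (μ.up_left_mem le_rfl hj1 (mem_iff_lt_colLen.mpr (by omega)))
    omega
  have hcol0 : 2 ≤ μ.colLen 0 := mem_iff_lt_colLen.mp h10
  have hsum : μ.card = μ.colLen 0 + (d - 1) := by
    rw [card_eq_sum_colLens, Finset.range_eq_Ico, Finset.sum_eq_sum_Ico_succ_bot hd]
    have h2 : ∑ j ∈ Ico 1 d, μ.colLen j = ∑ _j ∈ Ico 1 d, 1 :=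
      Finset.sum_congr rfl fun j hj => by
        obtain ⟨hj1, hj2⟩ := Finset.mem_Ico.mp hj
        exact hcolj j hj1 hj2
    rw [h2, Finset.sum_const, Nat.card_Ico, smul_eq_mul, mul_one]
  have hook00 : μ.hookLength (0, 0) = μ.card := by
    rw [hook_row0]
    omega
  have hIco : ∏ j ∈ Ico 1 d, μ.hookLength (0, j) = (d - 1)! := by
    have h2 : ∀ j ∈ Ico 1 d, μ.hookLength (0, j) = d - j := by
      intro j hj
      obtain ⟨hj1, hj2⟩ := Finset.mem_Ico.mp hj
      rw [hook_row0, hcolj j hj1 hj2]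
      omega
    rw [Finset.prod_congr rfl h2, Finset.prod_Ico_eq_prod_range]
    have h3 : ∀ t ∈ range (d - 1), d - (1 + t) = (d - 1) - t := fun t _ => by omega
    rw [Finset.prod_congr rfl h3, ← Nat.descFactorial_eq_prod_range,
      Nat.descFactorial_self]
  constructor
  · rw [P, Finset.range_eq_Ico, Finset.prod_eq_prod_Ico_succ_bot hd, hook00, hIco]
  · omega

/-- P for a two-row diagram. -/
lemma two_row_data {μ : YoungDiagram} (h10 : (1, 0) ∈ μ) (h20 : (2, 0) ∉ μ) :
    P μ = Nat.descFactorial (μ.rowLen 0 + 1) (μ.rowLen 1) * (μ.rowLen 0 - μ.rowLen 1)!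
      ∧ μ.card = μ.rowLen 0 + μ.rowLen 1 := by
  set d := μ.rowLen 0 with hdd
  set e := μ.rowLen 1 with hee
  have hed : e ≤ d := μ.rowLen_anti 0 1 (Nat.zero_le 1)
  have hcol : ∀ j < d, μ.colLen j = if j < e then 2 else 1 := by
    intro j hjd
    have h1 : 0 < μ.colLen j := colLen_pos hjd
    have h2 : μ.colLen j ≤ 2 := by
      by_contra hco
      exact h20 (μ.up_left_mem le_rfl (Nat.zero_le j) (mem_iff_lt_colLen.mpr (by omega)))
    have h3 : (1, j) ∈ μ ↔ j < e := mem_iff_lt_rowLen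
    rw [mem_iff_lt_colLen] at h3
    split_ifs with h4
    · omega
    · rw [← h3] at h4; omega
  have hsum : μ.card = d + e := by
    rw [card_eq_sum_colLens, ← Finset.sum_range_add_sum_Ico _ hed]
    have h2 : ∑ j ∈ range e, μ.colLen j = ∑ _j ∈ range e, 2 :=
      Finset.sum_congr rfl fun j hj => by
        have hje := Finset.mem_range.mp hj
        rw [hcol j (by omega)]
        simp [hje]
    have h3 : ∑ j ∈ Ico e d, μ.colLen j = ∑ _j ∈ Ico e d, 1 :=
      Finset.sum_congr rfl fun j hj => by
        obtain ⟨hj1, hj2⟩ := Finset.mem_Ico.mp hj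
        rw [hcol j hj2]
        simp [Nat.not_lt.mpr hj1]
    rw [h2, h3]
    simp only [Finset.sum_const, Nat.card_Ico, Finset.card_range, smul_eq_mul]
    have he1 : 1 ≤ e := mem_iff_lt_rowLen.mp h10
    omega
  refine ⟨?_, hsum⟩
  rw [P, ← Finset.prod_range_mul_prod_Ico _ hed]
  have h2 : ∏ j ∈ range e, μ.hookLength (0, j) = Nat.descFactorial (d + 1) e := by
    have h4 : ∀ j ∈ range e, μ.hookLength (0, j) = (d + 1) - j := by
      intro j hj
      have hje := Finset.mem_range.mp hj
      rw [hook_row0, hcol j (by omega)]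
      simp only [hje, if_true]
      omega
    rw [Finset.prod_congr rfl h4, ← Nat.descFactorial_eq_prod_range]
  have h3 : ∏ j ∈ Ico e d, μ.hookLength (0, j) = (d - e)! := by
    have h4 : ∀ j ∈ Ico e d, μ.hookLength (0, j) = d - j := by
      intro j hj
      obtain ⟨hj1, hj2⟩ := Finset.mem_Ico.mp hj
      rw [hook_row0, hcol j hj2]
      simp only [Nat.not_lt.mpr hj1, if_false]
      omega
    rw [Finset.prod_congr rfl h4, Finset.prod_Ico_eq_prod_range]
    have h5 : ∀ t ∈ range (d - e), d - (e + t) = (d - e) - t := fun t _ => by omega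
    rw [Finset.prod_congr rfl h5, ← Nat.descFactorial_eq_prod_range,
      Nat.descFactorial_self]
  rw [h2, h3]


lemma choose_le_of_two_row {d e : ℕ} (h1 : 1 ≤ e) (hed : e ≤ d) :
    (d + e).choose (e - 1) ≤ (d + e).choose e :=
  choose_mono_half (by omega) (by omega)

/-- The exact two-row hook identity:
`(C(d+e,e) - C(d+e,e-1)) * descFactorial (d+1) e * (d-e)! * e! = (d+e)!`. -/
lemma two_row_id {d e : ℕ} (h1 : 1 ≤ e) (hed : e ≤ d) :
    ((d + e).choose e - (d + e).choose (e - 1))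
      * (Nat.descFactorial (d + 1) e * (d - e)! * e !) = (d + e)! := by
  have hle := choose_le_of_two_row h1 hed
  have hA : Nat.descFactorial (d + 1) e = e ! * (d + 1).choose e :=
    Nat.descFactorial_eq_factorial_mul_choose _ _
  have hC0 : (d + 1).choose e * e ! * (d + 1 - e)! = (d + 1)! :=
    Nat.choose_mul_factorial_mul_factorial (by omega)
  have hC1 : (d + e).choose e * e ! * d ! = (d + e)! := by
    have := Nat.choose_mul_factorial_mul_factorial (show e ≤ d + e by omega)
    rwa [show d + e - e = d by omega] at this
  have hC2 : (d + e).choose (e - 1) * (e - 1)! * (d + 1)! = (d + e)! := by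
    have := Nat.choose_mul_factorial_mul_factorial (show e - 1 ≤ d + e by omega)
    rwa [show d + e - (e - 1) = d + 1 by omega] at this
  have hfe : e ! = e * (e - 1)! := by
    have h := Nat.factorial_succ (e - 1)
    rwa [show e - 1 + 1 = e by omega] at h
  have hfd : (d + 1)! = (d + 1) * d ! := Nat.factorial_succ d
  have hfde : (d + 1 - e)! = (d + 1 - e) * (d - e)! := by
    have h := Nat.factorial_succ (d - e)
    rwa [show d - e + 1 = d + 1 - e by omega] at h
  -- cast to ℚ
  set F1 : ℚ := (d ! : ℚ) with hF1
  set F2 : ℚ := ((e - 1)! : ℚ) with hF2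
  set F3 : ℚ := ((d - e)! : ℚ) with hF3
  set N : ℚ := ((d + e)! : ℚ) with hN
  have hQ : ((d + 1 - e : ℕ) : ℚ) = (d : ℚ) + 1 - e := by
    have : ((d + 1 - e : ℕ) : ℚ) = ((d + 1 : ℕ) : ℚ) - (e : ℚ) :=
      Nat.cast_sub (by omega)
    rw [this]
    push_cast
    ring
  have hF1ne : F1 ≠ 0 := by rw [hF1]; exact_mod_cast (Nat.factorial_pos _).ne'
  have hF2ne : F2 ≠ 0 := by rw [hF2]; exact_mod_cast (Nat.factorial_pos _).ne'
  have hF3ne : F3 ≠ 0 := by rw [hF3]; exact_mod_cast (Nat.factorial_pos _).ne'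
  have hEne : (e : ℚ) ≠ 0 := by exact_mod_cast (by omega : e ≠ 0)
  have hDne : (d : ℚ) + 1 ≠ 0 := by positivity
  have hQne : (d : ℚ) + 1 - e ≠ 0 := by
    have h5 : (e : ℚ) ≤ d := by exact_mod_cast hed
    intro hco
    linarith
  have qfe : (e ! : ℚ) = e * F2 := by rw [hF2]; exact_mod_cast hfe
  have qfd : ((d + 1)! : ℚ) = ((d : ℚ) + 1) * F1 := by
    rw [hF1]
    have : (((d + 1) * d ! : ℕ) : ℚ) = ((d : ℚ) + 1) * (d ! : ℚ) := by push_cast; ring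
    rw [← this]
    exact_mod_cast hfd
  have qfde : ((d + 1 - e)! : ℚ) = ((d : ℚ) + 1 - e) * F3 := by
    rw [hF3, ← hQ]
    exact_mod_cast hfde
  have q0 : ((d + 1).choose e : ℚ) * (e ! : ℚ) * ((d + 1 - e)! : ℚ) = ((d + 1)! : ℚ) := by
    exact_mod_cast hC0
  have q1 : ((d + e).choose e : ℚ) * (e ! : ℚ) * F1 = N := by
    rw [hF1, hN]; exact_mod_cast hC1
  have q2 : ((d + e).choose (e - 1) : ℚ) * F2 * ((d + 1)! : ℚ) = N := by
    rw [hF2, hN]; exact_mod_cast hC2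
  rw [qfe, qfde, qfd] at q0
  rw [qfe] at q1
  rw [qfd] at q2
  have c1_eq : ((d + e).choose e : ℚ) = N / ((e : ℚ) * F2 * F1) := by
    rw [eq_div_iff (by simp [hEne, hF2ne, hF1ne])]
    linear_combination q1
  have c2_eq : ((d + e).choose (e - 1) : ℚ) = N / (F2 * (((d : ℚ) + 1) * F1)) := by
    rw [eq_div_iff (by simp [hDne, hF2ne, hF1ne])]
    linear_combination q2
  have cp_eq : ((d + 1).choose e : ℚ)
      = (((d : ℚ) + 1) * F1) / (((e : ℚ) * F2) * (((d : ℚ) + 1 - e) * F3)) := by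
    rw [eq_div_iff (by simp [hEne, hF2ne, hF3ne, hQne])]
    linear_combination q0
  have key : (((d + e).choose e : ℚ) - ((d + e).choose (e - 1) : ℚ))
      * ((Nat.descFactorial (d + 1) e : ℚ) * F3 * (e ! : ℚ)) = N := by
    have qA : (Nat.descFactorial (d + 1) e : ℚ) = (e ! : ℚ) * ((d + 1).choose e : ℚ) := by
      exact_mod_cast hA
    rw [qA, qfe, c1_eq, c2_eq, cp_eq]
    field_simp
  have hcast : (((d + e).choose e - (d + e).choose (e - 1) : ℕ) : ℚ)
      = ((d + e).choose e : ℚ) - ((d + e).choose (e - 1) : ℚ) := Nat.cast_sub hle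
  have final : ((((d + e).choose e - (d + e).choose (e - 1))
      * (Nat.descFactorial (d + 1) e * (d - e)! * e !) : ℕ) : ℚ) = ((d + e)! : ℚ) := by
    push_cast [hcast]
    rw [← hF3, ← hN] at *
    linear_combination key
  exact_mod_cast final

/-- The two-row quotient is at least 2 (for `2 ≤ e ≤ d`). -/
lemma two_le_q {d e : ℕ} (h2 : 2 ≤ e) (hed : e ≤ d) :
    2 ≤ (d + e).choose e - (d + e).choose (e - 1) := by
  have hle := choose_le_of_two_row (by omega) hed
  have key : (d + e).choose e * e = (d + e).choose (e - 1) * (d + 1) := by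
    have := Nat.choose_succ_right_eq (d + e) (e - 1)
    rwa [show e - 1 + 1 = e by omega, show d + e - (e - 1) = d + 1 by omega] at this
  set q := (d + e).choose e - (d + e).choose (e - 1) with hq
  have hqe : q * e = (d + e).choose (e - 1) * (d + 1 - e) := by
    rw [hq, Nat.sub_mul, key, Nat.mul_sub]
  have main : 2 * e ≤ q * e := by
    rw [hqe]
    rcases Nat.eq_or_lt_of_le hed with hh | hh
    · -- e = d
      subst hh
      rw [show e + 1 - e = 1 by omega, mul_one]
      have h3 : (e + e).choose 1 ≤ (e + e).choose (e - 1) :=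
        choose_mono_half (by omega) (by omega)
      rw [Nat.choose_one_right] at h3
      omega
    · -- e < d
      have h3 : e ≤ (d + e).choose (e - 1) := by
        have h4 : d + e ≤ (d + e).choose (e - 1) :=
          le_choose (by omega) (by omega)
        omega
      have h4 : 2 ≤ d + 1 - e := by omega
      calc 2 * e = e * 2 := by ring
      _ ≤ (d + e).choose (e - 1) * (d + 1 - e) := Nat.mul_le_mul h3 h4
  exact Nat.le_of_mul_le_mul_right main (by omega)


/-- Lemma B: a diagram with at least two rows and two columns has `2 * hprod ≤ card!`. -/
lemma two_mul_hprod_le {μ : YoungDiagram} (h01 : (0, 1) ∈ μ) (h10 : (1, 0) ∈ μ) :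
    2 * hprod μ ≤ (μ.card)! := by
  obtain ⟨N, hN⟩ : ∃ N, μ.card ≤ N := ⟨μ.card, le_rfl⟩
  induction N generalizing μ with
  | zero =>
    exfalso
    have h' : (0, 1) ∈ μ.cells := h01
    have hcpos : 0 < μ.card := Finset.card_pos.mpr ⟨_, h'⟩
    omega
  | succ N ih =>
    have hd2 : 2 ≤ μ.rowLen 0 := mem_iff_lt_rowLen.mp h01
    have hd : 0 < μ.rowLen 0 := by omega
    have hdn : μ.rowLen 0 ≤ μ.card := rowLen_le_card μ
    have hcard' : (eraseTop μ).card = μ.card - μ.rowLen 0 := card_eraseTop μ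
    have h00' : (0, 0) ∈ eraseTop μ := mem_eraseTop.mpr h10
    have hpos' : 0 < (eraseTop μ).card := Finset.card_pos.mpr ⟨_, h00'⟩
    have hnpos : 0 < μ.card := by omega
    by_cases hb : (0, 1) ∈ eraseTop μ
    · by_cases hc : (1, 0) ∈ eraseTop μ
      · -- both: use induction hypothesis on eraseTop μ
        have hih : 2 * hprod (eraseTop μ) ≤ ((eraseTop μ).card)! := ih hb hc (by omega)
        calc 2 * hprod μ = P μ * (2 * hprod (eraseTop μ)) := by rw [hprod_eq]; ring
        _ ≤ Nat.descFactorial μ.card (μ.rowLen 0) * ((μ.card - μ.rowLen 0))! := by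
            rw [← hcard']
            exact Nat.mul_le_mul (P_le_descFactorial μ) hih
        _ = (μ.card)! := by
            rw [mul_comm]
            exact Nat.factorial_mul_descFactorial hdn
      · -- eraseTop μ is a single row: μ has exactly two rows
        have h20 : (2, 0) ∉ μ := fun hco => hc (mem_eraseTop.mpr hco)
        obtain ⟨hP, hsum⟩ := two_row_data h10 h20
        have hsr := hprod_single_row hc
        have he2 : 2 ≤ μ.rowLen 1 := by
          have : (1, 1) ∈ μ := mem_eraseTop.mp hb
          exact mem_iff_lt_rowLen.mp this
        have hed : μ.rowLen 1 ≤ μ.rowLen 0 := μ.rowLen_anti 0 1 (Nat.zero_le 1)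
        have hcard2 : (eraseTop μ).card = μ.rowLen 1 := by
          rw [hsr.2, rowLen_eraseTop]
        set d := μ.rowLen 0
        set e := μ.rowLen 1
        have hq := two_le_q he2 hed
        have hid := two_row_id (by omega : 1 ≤ e) hed
        calc 2 * hprod μ
            = 2 * (Nat.descFactorial (d + 1) e * (d - e)! * e !) := by
              rw [hprod_eq, hP, hsr.1, hcard2]
        _ ≤ ((d + e).choose e - (d + e).choose (e - 1))
              * (Nat.descFactorial (d + 1) e * (d - e)! * e !) :=
            Nat.mul_le_mul_right _ hq
        _ = (d + e)! := hid
        _ = (μ.card)! := by rw [hsum]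
    · -- eraseTop μ is a single column: μ is a hook
      have h11 : (1, 1) ∉ μ := fun hco => hb (mem_eraseTop.mpr hco)
      obtain ⟨hP, hdn1⟩ := hook_data h10 h11
      have hsc : hprod (eraseTop μ) = ((eraseTop μ).card)! := hprod_single_col hb
      set d := μ.rowLen 0
      set n := μ.card
      have hkey : (n - 1).choose (d - 1) * (d - 1)! * (n - d)! = (n - 1)! := by
        have := Nat.choose_mul_factorial_mul_factorial (show d - 1 ≤ n - 1 by omega)
        rwa [show n - 1 - (d - 1) = n - d by omega] at this
      have hch : 2 ≤ (n - 1).choose (d - 1) := by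
        have h5 : n - 1 ≤ (n - 1).choose (d - 1) := le_choose (by omega) (by omega)
        omega
      have hfact : n ! = n * (n - 1)! := by
        have h := Nat.factorial_succ (n - 1)
        rwa [show n - 1 + 1 = n by omega] at h
      calc 2 * hprod μ = 2 * (n * (d - 1)! * (n - d)!) := by
            rw [hprod_eq, hP, hsc, hcard']
      _ ≤ (n - 1).choose (d - 1) * (n * (d - 1)! * (n - d)!) :=
          Nat.mul_le_mul_right _ hch
      _ = n * ((n - 1).choose (d - 1) * (d - 1)! * (n - d)!) := by ring
      _ = n ! := by rw [hkey, ← hfact]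

end StmtAux

open Finset StmtAux Nat in
/-- Let `μ` be a Young diagram with `n` cells whose first row has length `d`, and let
`c_i = colLen (d-i)` be the column lengths in reverse order.  Then
`∏_{i=1}^{d} (1 + (c_i - 1)/i) ≤ (n/d)^d`, and consequently
`dim π_μ ≥ C(n,d) · (d/n)^d`. -/
theorem stmt2 (μ : YoungDiagram) (n d : ℕ) (hn : μ.card = n) (hd : d = μ.rowLen 0)
    (hdpos : 0 < d) :
    (∏ i ∈ Finset.Icc 1 d, (1 + ((μ.colLen (d - i) : ℝ) - 1) / (i : ℝ)))
      ≤ ((n : ℝ) / (d : ℝ)) ^ d ∧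
    (n.choose d : ℝ) * ((d : ℝ) / (n : ℝ)) ^ d ≤ (μ.dimIrrep : ℝ) := by
  have hnd : d ≤ n := by rw [← hn, hd]; exact rowLen_le_card μ
  have hn0 : 0 < n := by omega
  have hd0R : (0:ℝ) < (d:ℝ) := by exact_mod_cast hdpos
  have hn0R : (0:ℝ) < (n:ℝ) := by exact_mod_cast hn0
  -- the factorwise bound, in convenient form
  have hfact : ∀ i ∈ Finset.Icc 1 d, d * (i + μ.colLen (d - i) - 1) ≤ i * n := by
    intro i hi
    obtain ⟨hi1, hi2⟩ := Finset.mem_Icc.mp hi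
    have hjd : d - i < μ.rowLen 0 := by rw [← hd]; omega
    have hb := hook_bound2 μ hjd
    rw [hook_row0, ← hd, hn] at hb
    rw [show d - (d - i) = i by omega] at hb
    exact hb
  have hcpos : ∀ i ∈ Finset.Icc 1 d, 1 ≤ μ.colLen (d - i) := by
    intro i hi
    obtain ⟨hi1, hi2⟩ := Finset.mem_Icc.mp hi
    exact colLen_pos (by rw [← hd]; omega)
  -- Part 1
  have part1 : (∏ i ∈ Finset.Icc 1 d, (1 + ((μ.colLen (d - i) : ℝ) - 1) / (i : ℝ)))
      ≤ ((n : ℝ) / (d : ℝ)) ^ d := by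
    have hcard : (Finset.Icc 1 d).card = d := by rw [Nat.card_Icc]; omega
    calc (∏ i ∈ Finset.Icc 1 d, (1 + ((μ.colLen (d - i) : ℝ) - 1) / (i : ℝ)))
        ≤ ∏ _i ∈ Finset.Icc 1 d, ((n : ℝ) / (d : ℝ)) := by
          apply Finset.prod_le_prod
          · intro i hi
            have h1 := hcpos i hi
            obtain ⟨hi1, _⟩ := Finset.mem_Icc.mp hi
            have h2 : (1:ℝ) ≤ (μ.colLen (d - i) : ℝ) := by exact_mod_cast h1
            have h3 : (0:ℝ) < (i:ℝ) := by exact_mod_cast hi1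
            have h4 : (0:ℝ) ≤ ((μ.colLen (d - i) : ℝ) - 1) / (i : ℝ) := by
              apply div_nonneg (by linarith) (le_of_lt h3)
            linarith
          · intro i hi
            have h1 := hcpos i hi
            obtain ⟨hi1, hi2⟩ := Finset.mem_Icc.mp hi
            have h3 : (0:ℝ) < (i:ℝ) := by exact_mod_cast hi1
            have hb := hfact i hi
            have hbR : (d:ℝ) * ((i:ℝ) + (μ.colLen (d - i) : ℝ) - 1) ≤ (i:ℝ) * (n:ℝ) := by
              have h4 : 1 ≤ i + μ.colLen (d - i) := by omega
              have hcast : ((i + μ.colLen (d - i) - 1 : ℕ) : ℝ)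
                  = (i:ℝ) + (μ.colLen (d - i) : ℝ) - 1 := by
                push_cast [Nat.cast_sub h4]
                ring
              calc (d:ℝ) * ((i:ℝ) + (μ.colLen (d - i) : ℝ) - 1)
                  = ((d : ℕ) : ℝ) * ((i + μ.colLen (d - i) - 1 : ℕ) : ℝ) := by rw [hcast]
              _ = ((d * (i + μ.colLen (d - i) - 1) : ℕ) : ℝ) := by push_cast; ring
              _ ≤ ((i * n : ℕ) : ℝ) := by exact_mod_cast hb
              _ = (i:ℝ) * (n:ℝ) := by push_cast; ring
            have h5 : (1:ℝ) + ((μ.colLen (d - i) : ℝ) - 1) / (i:ℝ)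
                = ((i:ℝ) + (μ.colLen (d - i) : ℝ) - 1) / (i:ℝ) := by
              field_simp
              ring
            rw [h5, div_le_div_iff₀ h3 hd0R]
            calc ((i:ℝ) + (μ.colLen (d - i) : ℝ) - 1) * (d:ℝ)
                = (d:ℝ) * ((i:ℝ) + (μ.colLen (d - i) : ℝ) - 1) := by ring
            _ ≤ (i:ℝ) * (n:ℝ) := hbR
            _ = (n:ℝ) * (i:ℝ) := by ring
    _ = ((n : ℝ) / (d : ℝ)) ^ d := by rw [Finset.prod_const, hcard]
  refine ⟨part1, ?_⟩
  -- Part 2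
  set x : ℝ := (n.choose d : ℝ) * ((d : ℝ) / (n : ℝ)) ^ d with hx
  have hHpos : 0 < hprod μ := hprod_pos μ
  have hHposR : (0:ℝ) < (hprod μ : ℝ) := by exact_mod_cast hHpos
  have hxpos : 0 ≤ x := by rw [hx]; positivity
  have hdim : μ.dimIrrep = n ! / hprod μ := by
    rw [YoungDiagram.dimIrrep, hn]; rfl
  have hxP : x * (P μ : ℝ) ≤ (Nat.descFactorial n d : ℝ) := by
    have h1 : d ^ d * P μ ≤ d ! * n ^ d := by
      have := pow_mul_P_le μ
      rwa [← hd, hn] at this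
    have h1R : ((d:ℝ)) ^ d * (P μ : ℝ) ≤ (d ! : ℝ) * ((n:ℝ)) ^ d := by exact_mod_cast h1
    have hnpow : (0:ℝ) < ((n:ℝ)) ^ d := by positivity
    have hdescF : (Nat.descFactorial n d : ℝ) = (d ! : ℝ) * (n.choose d : ℝ) := by
      exact_mod_cast Nat.descFactorial_eq_factorial_mul_choose n d
    rw [hx, hdescF, div_pow]
    rw [show ((n.choose d : ℝ) * (((d:ℝ))^d / ((n:ℝ))^d) * (P μ : ℝ))
        = ((n.choose d : ℝ) * (((d:ℝ))^d * (P μ : ℝ))) / ((n:ℝ))^d from by ring]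
    rw [div_le_iff₀ hnpow]
    calc (n.choose d : ℝ) * (((d:ℝ))^d * (P μ : ℝ))
        ≤ (n.choose d : ℝ) * ((d ! : ℝ) * ((n:ℝ))^d) :=
        mul_le_mul_of_nonneg_left h1R (by positivity)
    _ = (d ! : ℝ) * (n.choose d : ℝ) * ((n:ℝ))^d := by ring
  have hcardE : (eraseTop μ).card = n - d := by
    rw [card_eraseTop, ← hd, hn]
  have hfdR : (Nat.descFactorial n d : ℝ) * ((n - d)! : ℝ) = ((n)! : ℝ) := by
    exact_mod_cast (by rw [mul_comm]; exact Nat.factorial_mul_descFactorial hnd :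
      Nat.descFactorial n d * (n - d)! = n !)
  have hxH : x * (hprod μ : ℝ) ≤ ((n)! : ℝ) := by
    have hE : hprod (eraseTop μ) ≤ (n - d)! := by
      have := hprod_le_factorial (eraseTop μ)
      rwa [hcardE] at this
    have hER : (hprod (eraseTop μ) : ℝ) ≤ ((n - d)! : ℝ) := by exact_mod_cast hE
    calc x * (hprod μ : ℝ) = (x * (P μ : ℝ)) * (hprod (eraseTop μ) : ℝ) := by
          rw [hprod_eq]; push_cast; ring
    _ ≤ (Nat.descFactorial n d : ℝ) * (hprod (eraseTop μ) : ℝ) :=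
        mul_le_mul_of_nonneg_right hxP (by positivity)
    _ ≤ (Nat.descFactorial n d : ℝ) * ((n - d)! : ℝ) :=
        mul_le_mul_of_nonneg_left hER (by positivity)
    _ = ((n)! : ℝ) := hfdR
  have exact_case : ∀ k : ℕ, k * hprod μ = n ! → x ≤ (μ.dimIrrep : ℝ) := by
    intro k hk
    have hdim2 : μ.dimIrrep = k := by
      rw [hdim, ← hk, Nat.mul_div_cancel _ hHpos]
    rw [hdim2]
    have hkR : (k:ℝ) * (hprod μ : ℝ) = ((n)! : ℝ) := by exact_mod_cast hk
    have hle2 : x * (hprod μ : ℝ) ≤ (k:ℝ) * (hprod μ : ℝ) := by rw [hkR]; exact hxH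
    exact le_of_mul_le_mul_right hle2 hHposR
  rcases le_or_gt x 1 with hx1 | hx1
  · have h1 : 1 ≤ μ.dimIrrep := by
      rw [hdim, Nat.le_div_iff_mul_le hHpos, one_mul]
      have := hprod_le_factorial μ
      rwa [hn] at this
    calc x ≤ 1 := hx1
    _ ≤ (μ.dimIrrep : ℝ) := by exact_mod_cast h1
  · by_cases h10 : (1, 0) ∈ μ
    · by_cases hb : (0, 1) ∈ eraseTop μ
      · by_cases hc : (1, 0) ∈ eraseTop μ
        · -- generic case : use the ceiling of x
          set k : ℕ := ⌈x⌉₊ with hk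
          have hk1 : x ≤ (k:ℝ) := Nat.le_ceil x
          have hk2 : (k:ℝ) < x + 1 := Nat.ceil_lt_add_one hxpos
          have h2H : 2 * hprod (eraseTop μ) ≤ (n - d)! := by
            have := two_mul_hprod_le hb hc
            rwa [hcardE] at this
          have h2HR : 2 * (hprod (eraseTop μ) : ℝ) ≤ ((n - d)! : ℝ) := by exact_mod_cast h2H
          have hkH : (k:ℝ) * (hprod μ : ℝ) ≤ ((n)! : ℝ) := by
            calc (k:ℝ) * (hprod μ : ℝ) ≤ (2 * x) * (hprod μ : ℝ) := by
                  apply mul_le_mul_of_nonneg_right _ (le_of_lt hHposR)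
                  nlinarith
            _ = (x * (P μ : ℝ)) * (2 * (hprod (eraseTop μ) : ℝ)) := by
                  rw [hprod_eq]; push_cast; ring
            _ ≤ (Nat.descFactorial n d : ℝ) * ((n - d)! : ℝ) :=
                  mul_le_mul hxP h2HR (by positivity) (by positivity)
            _ = ((n)! : ℝ) := hfdR
          have hkHN : k * hprod μ ≤ n ! := by exact_mod_cast hkH
          have hdge : k ≤ μ.dimIrrep := by
            rw [hdim, Nat.le_div_iff_mul_le hHpos]
            exact hkHN
          calc x ≤ (k:ℝ) := hk1
          _ ≤ (μ.dimIrrep : ℝ) := by exact_mod_cast hdge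
        · -- two-row case
          have h20 : (2, 0) ∉ μ := fun hco => hc (mem_eraseTop.mpr hco)
          obtain ⟨hP, hsum⟩ := two_row_data h10 h20
          have hsr := hprod_single_row hc
          have he1 : 1 ≤ μ.rowLen 1 := by
            have h00 : (0, 0) ∈ eraseTop μ := mem_eraseTop.mpr h10
            have h00' := mem_eraseTop.mp h00
            exact YoungDiagram.mem_iff_lt_rowLen.mp h00'
          have hed : μ.rowLen 1 ≤ μ.rowLen 0 := μ.rowLen_anti 0 1 (Nat.zero_le 1)
          have hcard2 : (eraseTop μ).card = μ.rowLen 1 := by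
            rw [hsr.2, rowLen_eraseTop]
          have hnde : n = d + μ.rowLen 1 := by rw [← hn, hsum, ← hd]
          apply exact_case ((d + μ.rowLen 1).choose (μ.rowLen 1)
            - (d + μ.rowLen 1).choose (μ.rowLen 1 - 1))
          rw [hprod_eq, hP, hsr.1, hcard2, ← hd, hnde]
          exact two_row_id he1 (by rw [← hd] at hed; exact hed)
      · -- hook case
        have h11 : (1, 1) ∉ μ := fun hco => hb (mem_eraseTop.mpr hco)
        obtain ⟨hP, hdn1⟩ := hook_data h10 h11
        have hsc : hprod (eraseTop μ) = (n - d)! := by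
          rw [hprod_single_col hb, hcardE]
        rw [hn, ← hd] at hP
        rw [← hd, hn] at hdn1
        apply exact_case ((n - 1).choose (d - 1))
        have hkey : (n - 1).choose (d - 1) * (d - 1)! * (n - d)! = (n - 1)! := by
          have := Nat.choose_mul_factorial_mul_factorial (show d - 1 ≤ n - 1 by omega)
          rwa [show n - 1 - (d - 1) = n - d by omega] at this
        have hfactn : n ! = n * (n - 1)! := by
          have h := Nat.factorial_succ (n - 1)
          rwa [show n - 1 + 1 = n by omega] at h
        rw [hprod_eq, hP, hsc]
        calc (n - 1).choose (d - 1) * (n * (d - 1)! * (n - d)!)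
            = n * ((n - 1).choose (d - 1) * (d - 1)! * (n - d)!) := by ring
        _ = n * (n - 1)! := by rw [hkey]
        _ = n ! := hfactn.symm
    · -- single row : x = 1, contradiction with 1 < x
      exfalso
      have hsr := hprod_single_row h10
      have hnd2 : n = d := by rw [← hn, hsr.2, ← hd]
      have hxx : x = 1 := by
        rw [hx, hnd2, Nat.choose_self]
        have hdd : (d:ℝ) / (d:ℝ) = 1 := div_self (ne_of_gt hd0R)
        rw [hdd, one_pow, Nat.cast_one, one_mul]
      rw [hxx] at hx1
      exact lt_irrefl 1 hx1
end

section
/- The associated graded algebra gr(ℂ[S_n]) of the group algebra of S_n (with respect to the filtration placing transpositions in degree 1), presented by generators s_{ij} (1 ≤ i < j ≤ n) with relations s_{ij}² = 0, s_{ij}s_{jk} = s_{ik}s_{ij} (distinct i,j,k), and s_{ij}s_{kl} = s_{kl}s_{ij} (distinct i,j,k,l), has dimension n!, with a basis given by ordered monomials s_{i_1 j_1}⋯s_{i_m j_m} in which max(i_l, j_l) strictly increases from left to right. -/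
/-- Generators `s_{ij}`, `1 ≤ i < j ≤ n`, of the associated graded of `ℂ[S_n]`. -/
def SGen (n : ℕ) : Type := {p : Fin n × Fin n // p.1 < p.2}

/-- `s_{ij}` for arbitrary distinct `i, j` (with `s_{ij} = s_{ji}`), as an element of the
free algebra on the generators. -/
noncomputable def sgen {n : ℕ} (i j : Fin n) (h : i ≠ j) : FreeAlgebra ℂ (SGen n) :=
  if hij : i < j then FreeAlgebra.ι ℂ ⟨(i, j), hij⟩
  else FreeAlgebra.ι ℂ ⟨(j, i), h.lt_or_gt.resolve_left hij⟩

/-- The homogenized defining relations of `gr ℂ[S_n]`: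
`s_{ij}² = 0`, `s_{ij}s_{jk} = s_{ik}s_{ij}` (distinct `i,j,k`), and
`s_{ij}s_{kl} = s_{kl}s_{ij}` (distinct `i,j,k,l`). -/
inductive grRel (n : ℕ) : FreeAlgebra ℂ (SGen n) → FreeAlgebra ℂ (SGen n) → Prop
  | sq (i j : Fin n) (h : i ≠ j) : grRel n (sgen i j h * sgen i j h) 0
  | braid (i j k : Fin n) (hij : i ≠ j) (hjk : j ≠ k) (hik : i ≠ k) :
      grRel n (sgen i j hij * sgen j k hjk) (sgen i k hik * sgen i j hij)
  | comm (i j k l : Fin n) (hij : i ≠ j) (hkl : k ≠ l) (hik : i ≠ k) (hil : i ≠ l)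
      (hjk : j ≠ k) (hjl : j ≠ l) :
      grRel n (sgen i j hij * sgen k l hkl) (sgen k l hkl * sgen i j hij)

/-- The index set of ordered monomials `s_{i_1 j_1}⋯s_{i_m j_m}` in which
`max(i_l, j_l) = j_l` strictly increases from left to right. -/
def OrderedWords (n : ℕ) : Type :=
  {l : List (SGen n) // List.Chain' (fun p q => p.1.2 < q.1.2) l}

namespace Stmt14Aux

open Equiv Equiv.Perm Finset

attribute [local instance] Classical.propDecidable

variable {n : ℕ}

/-! ### Orbit counting -/

noncomputable def orb (σ : Perm (Fin n)) (x : Fin n) : Finset (Fin n) :=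
  Finset.univ.filter (σ.SameCycle x)

lemma mem_orb {σ : Perm (Fin n)} {x y : Fin n} : y ∈ orb σ x ↔ σ.SameCycle x y := by
  simp [orb]

lemma orb_nonempty (σ : Perm (Fin n)) (x : Fin n) : (orb σ x).Nonempty :=
  ⟨x, mem_orb.2 (Equiv.Perm.SameCycle.refl _ _)⟩

noncomputable def mn (σ : Perm (Fin n)) (x : Fin n) : Fin n :=
  (orb σ x).min' (orb_nonempty σ x)

lemma sc_mn (σ : Perm (Fin n)) (x : Fin n) : σ.SameCycle x (mn σ x) :=
  mem_orb.1 ((orb σ x).min'_mem (orb_nonempty σ x))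

lemma orb_congr {σ : Perm (Fin n)} {x y : Fin n} (h : σ.SameCycle x y) :
    orb σ x = orb σ y := by
  ext z; simp only [mem_orb]
  exact ⟨fun hz => h.symm.trans hz, fun hz => h.trans hz⟩

lemma mn_congr {σ : Perm (Fin n)} {x y : Fin n} (h : σ.SameCycle x y) :
    mn σ x = mn σ y := by
  unfold mn; congr 1; exact orb_congr h

noncomputable def Mins (σ : Perm (Fin n)) : Finset (Fin n) :=
  Finset.univ.filter (fun x => mn σ x = x)

lemma mem_Mins {σ : Perm (Fin n)} {x : Fin n} : x ∈ Mins σ ↔ mn σ x = x := by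
  simp [Mins]

lemma mn_mem_Mins (σ : Perm (Fin n)) (x : Fin n) : mn σ x ∈ Mins σ :=
  mem_Mins.2 (mn_congr (sc_mn σ x)).symm

noncomputable def oc (σ : Perm (Fin n)) : ℕ := (Mins σ).card

lemma oc_one : oc (1 : Perm (Fin n)) = n := by
  have h : Mins (1 : Perm (Fin n)) = Finset.univ := by
    ext x
    simp only [mem_Mins, Finset.mem_univ, iff_true]
    have : orb (1 : Perm (Fin n)) x = {x} := by
      ext z; simp [mem_orb, Equiv.Perm.sameCycle_one, eq_comm]
    unfold mn; simp [this]
  rw [oc, h, Finset.card_univ, Fintype.card_fin]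

/-- Key characterization: same-cycle classes of `σ * swap i j` are contained in the
join of the classes of `σ` with the pair `{i,j}` merged. -/
lemma sc_mul_swap {σ : Perm (Fin n)} {i j x y : Fin n}
    (h : (σ * Equiv.swap i j).SameCycle x y) :
    σ.SameCycle x y ∨ (σ.SameCycle x i ∧ σ.SameCycle y j) ∨
      (σ.SameCycle x j ∧ σ.SameCycle y i) := by
  obtain ⟨k, -, rfl⟩ := h.exists_pow_eq'
  clear h
  induction k with
  | zero => exact Or.inl (by simpa using Equiv.Perm.SameCycle.refl σ x)
  | succ m ih =>
    rw [pow_succ', Equiv.Perm.mul_apply]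
    set z := ((σ * Equiv.swap i j) ^ m) x with hzdef
    have hρz : (σ * Equiv.swap i j) z = σ (Equiv.swap i j z) := rfl
    rcases eq_or_ne z i with hzi | hzi
    · rw [hzi] at ih
      rw [hρz, hzi, Equiv.swap_apply_left]
      rcases ih with hs | ⟨h1, h2⟩ | ⟨h1, h2⟩
      · exact Or.inr (Or.inl ⟨hs, Equiv.Perm.sameCycle_apply_left.2 (Equiv.Perm.SameCycle.refl _ _)⟩)
      · exact Or.inl ((h1.trans h2).trans (Equiv.Perm.sameCycle_apply_right.2 (Equiv.Perm.SameCycle.refl _ _)))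
      · exact Or.inl (h1.trans (Equiv.Perm.sameCycle_apply_right.2 (Equiv.Perm.SameCycle.refl _ _)))
    · rcases eq_or_ne z j with hzj | hzj
      · rw [hzj] at ih
        rw [hρz, hzj, Equiv.swap_apply_right]
        rcases ih with hs | ⟨h1, h2⟩ | ⟨h1, h2⟩
        · exact Or.inr (Or.inr ⟨hs, Equiv.Perm.sameCycle_apply_left.2 (Equiv.Perm.SameCycle.refl _ _)⟩)
        · exact Or.inl (h1.trans (Equiv.Perm.sameCycle_apply_right.2 (Equiv.Perm.SameCycle.refl _ _)))
        · exact Or.inl ((h1.trans h2).trans (Equiv.Perm.sameCycle_apply_right.2 (Equiv.Perm.SameCycle.refl _ _)))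
      · rw [hρz, Equiv.swap_apply_of_ne_of_ne hzi hzj]
        rcases ih with hs | ⟨h1, h2⟩ | ⟨h1, h2⟩
        · exact Or.inl (hs.trans (Equiv.Perm.sameCycle_apply_right.2 (Equiv.Perm.SameCycle.refl _ _)))
        · exact Or.inr (Or.inl ⟨h1, Equiv.Perm.sameCycle_apply_left.2 h2⟩)
        · exact Or.inr (Or.inr ⟨h1, Equiv.Perm.sameCycle_apply_left.2 h2⟩)

lemma sc_pair {σ : Perm (Fin n)} {i j : Fin n} (hij : i ≠ j) (h : ¬ σ.SameCycle i j) :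
    (σ * Equiv.swap i j).SameCycle i j := by
  have hex : ∃ k, 0 < k ∧ (σ ^ k) j = j :=
    ⟨orderOf σ, orderOf_pos σ, by rw [pow_orderOf_eq_one]; rfl⟩
  obtain ⟨hkpos, hkfix⟩ := Nat.find_spec hex
  set k := Nat.find hex with hkdef
  have main : ∀ m, 0 < m → m ≤ k → ((σ * Equiv.swap i j) ^ m) i = (σ ^ m) j := by
    intro m
    induction m with
    | zero => omega
    | succ m ih =>
      intro _ hmk
      rcases Nat.eq_zero_or_pos m with rfl | hm
      · simp [pow_one, Equiv.Perm.mul_apply, Equiv.swap_apply_left]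
      · have hmk' : m ≤ k := by omega
        have hprev := ih hm hmk'
        have h1 : (σ ^ m) j ≠ j := by
          intro hc
          exact Nat.find_min hex (by omega : m < k) ⟨hm, hc⟩
        have h2 : (σ ^ m) j ≠ i := by
          intro hc
          exact h (Equiv.Perm.SameCycle.symm ⟨(m : ℤ), by rw [zpow_natCast]; exact hc⟩)
        rw [pow_succ', Equiv.Perm.mul_apply, hprev, Equiv.Perm.mul_apply,
          Equiv.swap_apply_of_ne_of_ne h2 h1, ← Equiv.Perm.mul_apply, ← pow_succ']
  exact ⟨(k : ℤ), by rw [zpow_natCast, main k hkpos le_rfl, hkfix]⟩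

lemma sc_mono {σ : Perm (Fin n)} {i j : Fin n} (hij : i ≠ j) (hns : ¬ σ.SameCycle i j)
    {x y : Fin n} (hxy : σ.SameCycle x y) : (σ * Equiv.swap i j).SameCycle x y := by
  have hpair := sc_pair hij hns
  have step : ∀ z, (σ * Equiv.swap i j).SameCycle z (σ z) := by
    intro z
    rcases eq_or_ne z i with hzi | hzi
    · subst hzi
      have hval : (σ * Equiv.swap z j) j = σ z := by
        rw [Equiv.Perm.mul_apply, Equiv.swap_apply_right]
      exact hpair.trans (by rw [← hval]; exact Equiv.Perm.sameCycle_apply_right.2 (Equiv.Perm.SameCycle.refl _ _))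
    · rcases eq_or_ne z j with hzj | hzj
      · subst hzj
        have hval : (σ * Equiv.swap i z) i = σ z := by
          rw [Equiv.Perm.mul_apply, Equiv.swap_apply_left]
        exact hpair.symm.trans (by rw [← hval]; exact Equiv.Perm.sameCycle_apply_right.2 (Equiv.Perm.SameCycle.refl _ _))
      · have hval : (σ * Equiv.swap i j) z = σ z := by
          rw [Equiv.Perm.mul_apply, Equiv.swap_apply_of_ne_of_ne hzi hzj]
        rw [← hval]
        exact Equiv.Perm.sameCycle_apply_right.2 (Equiv.Perm.SameCycle.refl _ _)
  obtain ⟨k, -, rfl⟩ := hxy.exists_pow_eq'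
  clear hxy
  induction k with
  | zero => simpa using Equiv.Perm.SameCycle.refl _ x
  | succ m ih =>
    rw [pow_succ', Equiv.Perm.mul_apply]
    exact ih.trans (step _)

lemma oc_mul_swap_merge {σ : Perm (Fin n)} {i j : Fin n} (hij : i ≠ j)
    (h : ¬ σ.SameCycle i j) : oc σ = oc (σ * Equiv.swap i j) + 1 := by
  set ρ := σ * Equiv.swap i j with hρ
  have hb : mn σ j ∈ Mins σ := mn_mem_Mins σ j
  have hcard : ((Mins σ).erase (mn σ j)).card = (Mins ρ).card := by
    apply Finset.card_bij (fun x _ => mn ρ x)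
    · intro a _; exact mn_mem_Mins ρ a
    · intro a ha b hb' hab
      obtain ⟨hane, haM⟩ := Finset.mem_erase.mp ha
      obtain ⟨hbne, hbM⟩ := Finset.mem_erase.mp hb'
      have hab2 : mn ρ a = mn ρ b := hab
      have hab' : ρ.SameCycle a b := (sc_mn ρ a).trans (by rw [hab2]; exact (sc_mn ρ b).symm)
      rcases sc_mul_swap hab' with hs | ⟨hai, hbj⟩ | ⟨haj, hbi⟩
      · calc a = mn σ a := (mem_Mins.mp haM).symm
          _ = mn σ b := mn_congr hs
          _ = b := mem_Mins.mp hbM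
      · exact absurd (((mem_Mins.mp hbM).symm).trans (mn_congr hbj)) hbne
      · exact absurd (((mem_Mins.mp haM).symm).trans (mn_congr haj)) hane
    · intro m hm
      by_cases hmj : σ.SameCycle m j
      · refine ⟨mn σ i, Finset.mem_erase.mpr ⟨?_, mn_mem_Mins σ i⟩, ?_⟩
        · intro hc
          exact h ((sc_mn σ i).trans (hc ▸ (sc_mn σ j).symm))
        · have h1 : ρ.SameCycle (mn σ i) m :=
            ((sc_mono hij h (sc_mn σ i).symm).trans (sc_pair hij h)).trans
              (sc_mono hij h hmj.symm)
          calc mn ρ (mn σ i) = mn ρ m := mn_congr h1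
            _ = m := mem_Mins.mp hm
      · refine ⟨mn σ m, Finset.mem_erase.mpr ⟨?_, mn_mem_Mins σ m⟩, ?_⟩
        · intro hc
          exact hmj ((sc_mn σ m).trans (hc ▸ (sc_mn σ j).symm))
        · have h1 : ρ.SameCycle (mn σ m) m := sc_mono hij h (sc_mn σ m).symm
          calc mn ρ (mn σ m) = mn ρ m := mn_congr h1
            _ = m := mem_Mins.mp hm
  have h2 := Finset.card_erase_add_one hb
  unfold oc
  omega

lemma oc_le_mul_swap {σ : Perm (Fin n)} {i j : Fin n} (hij : i ≠ j) :
    oc σ ≤ oc (σ * Equiv.swap i j) + 1 := by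
  set ρ := σ * Equiv.swap i j with hρ
  have hb : mn σ j ∈ Mins σ := mn_mem_Mins σ j
  have hcard : ((Mins σ).erase (mn σ j)).card ≤ (Mins ρ).card := by
    apply Finset.card_le_card_of_injOn (fun x => mn ρ x) (fun a _ => mn_mem_Mins ρ a)
    intro a ha b hb' hab
    obtain ⟨hane, haM⟩ := Finset.mem_erase.mp (Finset.mem_coe.mp ha)
    obtain ⟨hbne, hbM⟩ := Finset.mem_erase.mp (Finset.mem_coe.mp hb')
    have hab2 : mn ρ a = mn ρ b := hab
    have hab' : ρ.SameCycle a b := (sc_mn ρ a).trans (by rw [hab2]; exact (sc_mn ρ b).symm)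
    rcases sc_mul_swap hab' with hs | ⟨hai, hbj⟩ | ⟨haj, hbi⟩
    · calc a = mn σ a := (mem_Mins.mp haM).symm
        _ = mn σ b := mn_congr hs
        _ = b := mem_Mins.mp hbM
    · exact absurd (((mem_Mins.mp hbM).symm).trans (mn_congr hbj)) hbne
    · exact absurd (((mem_Mins.mp haM).symm).trans (mn_congr haj)) hane
  have h2 := Finset.card_erase_add_one hb
  unfold oc
  omega

lemma oc_inv (σ : Perm (Fin n)) : oc σ⁻¹ = oc σ := by
  unfold oc; congr 1
  unfold Mins
  apply Finset.filter_congr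
  intro x _
  have horb : orb σ⁻¹ x = orb σ x := by
    ext z; simp [mem_orb, Equiv.Perm.sameCycle_inv]
  have : mn σ⁻¹ x = mn σ x := by unfold mn; congr 1
  simp [this]

lemma oc_le_swap_mul {σ : Perm (Fin n)} {i j : Fin n} (hij : i ≠ j) :
    oc σ ≤ oc (Equiv.swap i j * σ) + 1 := by
  have h1 : oc (Equiv.swap i j * σ) = oc (σ⁻¹ * Equiv.swap i j) := by
    rw [show σ⁻¹ * Equiv.swap i j = (Equiv.swap i j * σ)⁻¹ by simp [mul_inv_rev], oc_inv]
  rw [h1, ← oc_inv σ]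
  exact oc_le_mul_swap hij

lemma oc_swap_mul_merge {σ : Perm (Fin n)} {i j : Fin n} (hij : i ≠ j)
    (h : ¬ σ.SameCycle i j) : oc σ = oc (Equiv.swap i j * σ) + 1 := by
  have h1 : oc (Equiv.swap i j * σ) = oc (σ⁻¹ * Equiv.swap i j) := by
    rw [show σ⁻¹ * Equiv.swap i j = (Equiv.swap i j * σ)⁻¹ by simp [mul_inv_rev], oc_inv]
  rw [h1, ← oc_inv σ]
  exact oc_mul_swap_merge hij (fun hc => h (Equiv.Perm.sameCycle_inv.mp hc))

/-! ### Reflection length -/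

def IsSwapList (l : List (Perm (Fin n))) : Prop := ∀ t ∈ l, t.IsSwap

lemma ex_swapList (σ : Perm (Fin n)) :
    ∃ k : ℕ, ∃ l : List (Perm (Fin n)), IsSwapList l ∧ l.prod = σ ∧ l.length = k := by
  suffices h : ∃ l : List (Perm (Fin n)), IsSwapList l ∧ l.prod = σ by
    obtain ⟨l, h1, h2⟩ := h; exact ⟨l.length, l, h1, h2, rfl⟩
  refine Equiv.Perm.swap_induction_on σ ⟨[], fun t ht => absurd ht List.not_mem_nil, List.prod_nil⟩ ?_
  rintro f x y hxy ⟨l, h1, h2⟩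
  refine ⟨Equiv.swap x y :: l, ?_, by rw [List.prod_cons, h2]⟩
  intro t ht
  rcases List.mem_cons.mp ht with rfl | ht'
  · exact ⟨x, y, hxy, rfl⟩
  · exact h1 t ht'

noncomputable def ell (σ : Perm (Fin n)) : ℕ := Nat.find (ex_swapList σ)

lemma ell_le {σ : Perm (Fin n)} {l : List (Perm (Fin n))} (h1 : IsSwapList l)
    (h2 : l.prod = σ) : ell σ ≤ l.length :=
  Nat.find_le ⟨l, h1, h2, rfl⟩

lemma ell_spec (σ : Perm (Fin n)) :
    ∃ l : List (Perm (Fin n)), IsSwapList l ∧ l.prod = σ ∧ l.length = ell σ :=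
  Nat.find_spec (ex_swapList σ)

lemma ell_one : ell (1 : Perm (Fin n)) = 0 :=
  Nat.le_zero.mp (ell_le (fun t ht => absurd ht List.not_mem_nil) List.prod_nil)

lemma ell_mul_le (σ τ : Perm (Fin n)) : ell (σ * τ) ≤ ell σ + ell τ := by
  obtain ⟨l1, h11, h12, h13⟩ := ell_spec σ
  obtain ⟨l2, h21, h22, h23⟩ := ell_spec τ
  have := ell_le (σ := σ * τ) (l := l1 ++ l2)
    (fun t ht => (List.mem_append.mp ht).elim (h11 t) (h21 t))
    (by rw [List.prod_append, h12, h22])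
  rwa [List.length_append, h13, h23] at this

lemma ell_swap_le {i j : Fin n} (hij : i ≠ j) : ell (Equiv.swap i j) ≤ 1 :=
  ell_le (l := [Equiv.swap i j])
    (fun t ht => by rw [List.mem_singleton] at ht; exact ht ▸ ⟨i, j, hij, rfl⟩)
    (List.prod_singleton)

lemma ell_mul_swap_le (σ : Perm (Fin n)) {i j : Fin n} (hij : i ≠ j) :
    ell (σ * Equiv.swap i j) ≤ ell σ + 1 :=
  (ell_mul_le σ (Equiv.swap i j)).trans (by have := ell_swap_le hij; omega)

lemma ell_le_mul_swap (σ : Perm (Fin n)) {i j : Fin n} (hij : i ≠ j) :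
    ell σ ≤ ell (σ * Equiv.swap i j) + 1 := by
  have := ell_mul_swap_le (σ * Equiv.swap i j) hij
  rwa [mul_assoc, Equiv.swap_mul_self, mul_one] at this

lemma oc_add_length_ge : ∀ (l : List (Perm (Fin n))), IsSwapList l →
    n ≤ oc l.prod + l.length := by
  intro l
  induction l with
  | nil => intro _; rw [List.prod_nil, oc_one]; omega
  | cons t l ih =>
    intro hl
    obtain ⟨a, b, hab, hts⟩ := hl t (List.mem_cons_self)
    have h1 := ih (fun s hs => hl s (List.mem_cons_of_mem t hs))
    have h2 : oc l.prod ≤ oc (t * l.prod) + 1 := by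
      rw [hts]; exact oc_le_swap_mul hab
    rw [List.prod_cons, List.length_cons]
    omega

/-- Peeling off the top point of the support. -/
lemma peel {σ : Perm (Fin n)} (hne : σ ≠ 1) :
    ∃ i j : Fin n, i ≠ j ∧ σ i = j ∧ j ∈ σ.support ∧ (∀ x ∈ σ.support, x ≤ j) ∧
      (σ * Equiv.swap i j).support ⊆ σ.support.erase j ∧
      ¬ (σ * Equiv.swap i j).SameCycle i j := by
  have hs : σ.support.Nonempty := by
    rw [Finset.nonempty_iff_ne_empty]
    simpa [Equiv.Perm.support_eq_empty_iff] using hne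
  set j := σ.support.max' hs with hjdef
  have hjmem : j ∈ σ.support := σ.support.max'_mem hs
  have hj : σ j ≠ j := Equiv.Perm.mem_support.mp hjmem
  set i := σ⁻¹ j with hidef
  have hσi : σ i = j := Equiv.apply_symm_apply σ j
  have hij : i ≠ j := by
    intro hc
    rw [hc] at hσi
    exact hj hσi
  have hfixj : (σ * Equiv.swap i j) j = j := by
    rw [Equiv.Perm.mul_apply, Equiv.swap_apply_right, hσi]
  refine ⟨i, j, hij, hσi, hjmem, fun x hx => σ.support.le_max' x hx, ?_, ?_⟩
  · intro x hx
    have hxne : (σ * Equiv.swap i j) x ≠ x := Equiv.Perm.mem_support.mp hx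
    have hxj : x ≠ j := by
      intro hc; rw [hc] at hxne; exact hxne hfixj
    rcases eq_or_ne x i with rfl | hxi
    · refine Finset.mem_erase.mpr ⟨hxj, Equiv.Perm.mem_support.mpr ?_⟩
      rw [hσi]; exact fun hc => hxj hc.symm
    · refine Finset.mem_erase.mpr ⟨hxj, Equiv.Perm.mem_support.mpr ?_⟩
      rw [Equiv.Perm.mul_apply, Equiv.swap_apply_of_ne_of_ne hxi hxj] at hxne
      exact hxne
  · intro hc
    obtain ⟨k, hk⟩ := hc.symm
    rw [Equiv.Perm.zpow_apply_eq_self_of_apply_eq_self hfixj] at hk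
    exact hij hk.symm

lemma ell_oc_le : ∀ (k : ℕ) (σ : Perm (Fin n)), σ.support.card ≤ k → ell σ + oc σ ≤ n := by
  intro k
  induction k with
  | zero =>
    intro σ hσ
    have h1 : σ = 1 := by
      rw [← Equiv.Perm.support_eq_empty_iff]
      exact Finset.card_eq_zero.mp (Nat.le_zero.mp hσ)
    subst h1
    rw [ell_one, oc_one]
    omega
  | succ k ih =>
    intro σ hσ
    by_cases hne : σ = 1
    · subst hne; rw [ell_one, oc_one]; omega
    obtain ⟨i, j, hij, hσi, hjs, hmax, hsupp, hnsc⟩ := peel hne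
    have hcard : (σ * Equiv.swap i j).support.card ≤ k := by
      have h1 : (σ.support.erase j).card < σ.support.card := Finset.card_erase_lt_of_mem hjs
      have h2 := Finset.card_le_card hsupp
      omega
    have hoc : oc (σ * Equiv.swap i j) = oc σ + 1 := by
      have h3 := oc_mul_swap_merge hij hnsc
      rwa [mul_assoc, Equiv.swap_mul_self, mul_one] at h3
    have hell : ell σ ≤ ell (σ * Equiv.swap i j) + 1 := ell_le_mul_swap σ hij
    have := ih (σ * Equiv.swap i j) hcard
    omega

lemma ell_add_oc (σ : Perm (Fin n)) : ell σ + oc σ = n := by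
  have h1 := ell_oc_le σ.support.card σ le_rfl
  obtain ⟨l, hl1, hl2, hl3⟩ := ell_spec σ
  have h2 := oc_add_length_ge l hl1
  rw [hl2, hl3] at h2
  omega

lemma ell_mul_swap_eq {σ : Perm (Fin n)} {i j : Fin n} (hij : i ≠ j)
    (h : ¬ σ.SameCycle i j) : ell (σ * Equiv.swap i j) = ell σ + 1 := by
  have h1 := ell_add_oc σ
  have h2 := ell_add_oc (σ * Equiv.swap i j)
  have h3 := oc_mul_swap_merge hij h
  omega
/-! ### The representation -/

abbrev W (n : ℕ) := Equiv.Perm (Fin n) →₀ ℂ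

def tg (g : SGen n) : Perm (Fin n) := Equiv.swap g.1.1 g.1.2

def pr (i j : Fin n) (h : i ≠ j) : SGen n :=
  if hij : i < j then ⟨(i, j), hij⟩ else ⟨(j, i), h.lt_or_gt.resolve_left hij⟩

lemma sgen_eq (i j : Fin n) (h : i ≠ j) : sgen i j h = FreeAlgebra.ι ℂ (pr i j h) := by
  by_cases hij : i < j
  · have e1 : sgen i j h = FreeAlgebra.ι ℂ ⟨(i, j), hij⟩ := dif_pos hij
    have e2 : pr i j h = ⟨(i, j), hij⟩ := dif_pos hij
    exact e1.trans (congrArg _ e2.symm)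
  · have e1 : sgen i j h = FreeAlgebra.ι ℂ ⟨(j, i), h.lt_or_gt.resolve_left hij⟩ := dif_neg hij
    have e2 : pr i j h = ⟨(j, i), h.lt_or_gt.resolve_left hij⟩ := dif_neg hij
    exact e1.trans (congrArg _ e2.symm)

lemma tg_pr (i j : Fin n) (h : i ≠ j) : tg (pr i j h) = Equiv.swap i j := by
  by_cases hij : i < j
  · have e : pr i j h = ⟨(i, j), hij⟩ := dif_pos hij
    exact (congrArg tg e).trans rfl
  · have e : pr i j h = ⟨(j, i), h.lt_or_gt.resolve_left hij⟩ := dif_neg hij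
    exact (congrArg tg e).trans (Equiv.swap_comm j i)

lemma pr_snd_lt {i j m : Fin n} (h : i ≠ j) (hi : i < m) (hj : j < m) :
    (pr i j h).1.2 < m := by
  by_cases hij : i < j
  · have e : pr i j h = ⟨(i, j), hij⟩ := dif_pos hij
    exact lt_of_eq_of_lt (congrArg (fun g : SGen n => g.1.2) e) hj
  · have e : pr i j h = ⟨(j, i), h.lt_or_gt.resolve_left hij⟩ := dif_neg hij
    exact lt_of_eq_of_lt (congrArg (fun g : SGen n => g.1.2) e) hi

lemma pr_lt {i j : Fin n} (h : i < j) (h' : i ≠ j) : pr i j h' = ⟨(i, j), h⟩ := dif_pos h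

lemma pr_gt {i j : Fin n} (h : j < i) (h' : i ≠ j) : pr i j h' = ⟨(j, i), h⟩ :=
  dif_neg (by exact fun hc => absurd h (asymm hc))

noncomputable def Aop (g : SGen n) : W n →ₗ[ℂ] W n :=
  Finsupp.lsum ℂ (fun σ =>
    if ell (σ * tg g) = ell σ + 1 then (Finsupp.lsingle (σ * tg g) : ℂ →ₗ[ℂ] W n) else 0)

lemma Aop_single (g : SGen n) (σ : Perm (Fin n)) (c : ℂ) :
    Aop g (Finsupp.single σ c) =
      if ell (σ * tg g) = ell σ + 1 then Finsupp.single (σ * tg g) c else 0 := by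
  unfold Aop
  rw [Finsupp.lsum_single]
  split_ifs
  · rw [Finsupp.lsingle_apply]
  · rfl

lemma tg_ne (g : SGen n) : g.1.1 ≠ g.1.2 := ne_of_lt g.2

lemma Aop_Aop (g g' : SGen n) (σ : Perm (Fin n)) (c : ℂ) :
    Aop g' (Aop g (Finsupp.single σ c)) =
      if ell (σ * tg g * tg g') = ell σ + 2 then Finsupp.single (σ * tg g * tg g') c
      else 0 := by
  rw [Aop_single]
  by_cases h1 : ell (σ * tg g) = ell σ + 1
  · rw [if_pos h1, Aop_single]
    by_cases h2 : ell (σ * tg g * tg g') = ell (σ * tg g) + 1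
    · rw [if_pos h2, if_pos (by omega)]
    · rw [if_neg h2, if_neg (by omega)]
  · rw [if_neg h1, map_zero, if_neg ?_]
    intro hc
    have ha : ell (σ * tg g * tg g') ≤ ell (σ * tg g) + 1 := ell_mul_swap_le _ (tg_ne g')
    have hb : ell (σ * tg g) ≤ ell σ + 1 := ell_mul_swap_le _ (tg_ne g)
    omega

lemma swap_braid {i j k : Fin n} (hij : i ≠ j) (hjk : j ≠ k) (hik : i ≠ k) :
    Equiv.swap j k * Equiv.swap i j = Equiv.swap i j * Equiv.swap i k := by
  ext x
  simp only [Equiv.Perm.mul_apply, Equiv.swap_apply_def]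
  split_ifs <;> simp_all

lemma swap_comm_disj {i j k l : Fin n} (hik : i ≠ k) (hil : i ≠ l) (hjk : j ≠ k)
    (hjl : j ≠ l) :
    Equiv.swap i j * Equiv.swap k l = Equiv.swap k l * Equiv.swap i j := by
  ext x
  simp only [Equiv.Perm.mul_apply, Equiv.swap_apply_def]
  split_ifs <;> simp_all

lemma end_eq {g1 g2 g1' g2' : SGen n} (hp : tg g1 * tg g2 = tg g1' * tg g2') :
    (Aop g2 : Module.End ℂ (W n)) * Aop g1 = (Aop g2' : Module.End ℂ (W n)) * Aop g1' := by
  apply Finsupp.lhom_ext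
  intro σ c
  rw [Module.End.mul_apply, Module.End.mul_apply, Aop_Aop, Aop_Aop,
    show σ * tg g1 * tg g2 = σ * tg g1' * tg g2' by rw [mul_assoc, hp, ← mul_assoc]]

lemma end_sq (g : SGen n) : (Aop g : Module.End ℂ (W n)) * Aop g = 0 := by
  apply Finsupp.lhom_ext
  intro σ c
  rw [Module.End.mul_apply, Aop_Aop]
  have h1 : σ * tg g * tg g = σ := by
    rw [mul_assoc, tg, Equiv.swap_mul_self, mul_one]
  rw [if_neg (by rw [h1]; omega)]
  rfl

lemma rel_lift : ∀ ⦃x y : FreeAlgebra ℂ (SGen n)⦄, grRel n x y →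
    FreeAlgebra.lift ℂ (Aop (n := n)) x = FreeAlgebra.lift ℂ (Aop (n := n)) y := by
  intro x y h
  cases h with
  | sq i j hij =>
    rw [map_mul, map_zero, sgen_eq, FreeAlgebra.lift_ι_apply]
    exact end_sq _
  | braid i j k hij hjk hik =>
    rw [map_mul, map_mul, sgen_eq i j hij, sgen_eq j k hjk, sgen_eq i k hik,
      FreeAlgebra.lift_ι_apply, FreeAlgebra.lift_ι_apply, FreeAlgebra.lift_ι_apply]
    exact end_eq (by rw [tg_pr, tg_pr, tg_pr, swap_braid hij hjk hik])
  | comm i j k l hij hkl hik hil hjk hjl =>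
    rw [map_mul, map_mul, sgen_eq i j hij, sgen_eq k l hkl,
      FreeAlgebra.lift_ι_apply, FreeAlgebra.lift_ι_apply]
    exact end_eq (by rw [tg_pr, tg_pr, swap_comm_disj hik hil hjk hjl])

noncomputable def rho (n : ℕ) : RingQuot (grRel n) →ₐ[ℂ] Module.End ℂ (W n) :=
  RingQuot.liftAlgHom ℂ ⟨FreeAlgebra.lift ℂ (Aop (n := n)), rel_lift⟩

noncomputable def mkA (n : ℕ) : FreeAlgebra ℂ (SGen n) →ₐ[ℂ] RingQuot (grRel n) :=
  RingQuot.mkAlgHom ℂ (grRel n)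

noncomputable def gq (g : SGen n) : RingQuot (grRel n) := mkA n (FreeAlgebra.ι ℂ g)

lemma rho_gq (g : SGen n) : rho n (gq g) = Aop g := by
  rw [gq, mkA, rho, RingQuot.liftAlgHom_mkAlgHom_apply, FreeAlgebra.lift_ι_apply]
/-! ### Words -/

abbrev OrdW {n : ℕ} (w : List (SGen n)) : Prop :=
  List.Chain' (fun p q => p.1.2 < q.1.2) w

instance : IsTrans (SGen n) (fun p q => p.1.2 < q.1.2) :=
  ⟨fun _ _ _ h1 h2 => lt_trans h1 h2⟩

lemma ord_all {g : SGen n} {w : List (SGen n)} (h : OrdW (g :: w)) :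
    ∀ q ∈ w, g.1.2 < q.1.2 := by
  have hp := List.isChain_iff_pairwise.mp h
  exact fun q hq => (List.pairwise_cons.mp hp).1 q hq

def pi (w : List (SGen n)) : Perm (Fin n) := (w.map tg).prod

def piR (w : List (SGen n)) : Perm (Fin n) := ((w.map tg).reverse).prod

@[simp] lemma pi_nil : pi ([] : List (SGen n)) = 1 := rfl

@[simp] lemma piR_nil : piR ([] : List (SGen n)) = 1 := rfl

lemma pi_cons (g : SGen n) (w : List (SGen n)) : pi (g :: w) = tg g * pi w := by
  simp [pi]

lemma piR_cons (g : SGen n) (w : List (SGen n)) : piR (g :: w) = piR w * tg g := by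
  simp [piR]

lemma pi_concat (w : List (SGen n)) (g : SGen n) : pi (w ++ [g]) = pi w * tg g := by
  simp [pi]

lemma piR_inv (w : List (SGen n)) : (piR w)⁻¹ = pi w := by
  induction w with
  | nil => simp
  | cons g w ih =>
    rw [piR_cons, mul_inv_rev, ih, pi_cons]
    congr 1

lemma sc_piR (w : List (SGen n)) {x y : Fin n} :
    (piR w).SameCycle x y ↔ (pi w).SameCycle x y := by
  rw [← piR_inv, Equiv.Perm.sameCycle_inv]

/-- Left version of `sc_mul_swap` (used with `tg g`). -/
lemma sc_swap_mul {σ : Perm (Fin n)} {i j x y : Fin n}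
    (h : (Equiv.swap i j * σ).SameCycle x y) :
    σ.SameCycle x y ∨ (σ.SameCycle x i ∧ σ.SameCycle y j) ∨
      (σ.SameCycle x j ∧ σ.SameCycle y i) := by
  have h2 : (σ⁻¹ * Equiv.swap i j).SameCycle x y := by
    rw [show σ⁻¹ * Equiv.swap i j = (Equiv.swap i j * σ)⁻¹ by simp [mul_inv_rev],
      Equiv.Perm.sameCycle_inv]
    exact h
  rcases sc_mul_swap h2 with hs | ⟨h1a, h1b⟩ | ⟨h1a, h1b⟩
  · exact Or.inl (Equiv.Perm.sameCycle_inv.mp hs)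
  · exact Or.inr (Or.inl ⟨Equiv.Perm.sameCycle_inv.mp h1a, Equiv.Perm.sameCycle_inv.mp h1b⟩)
  · exact Or.inr (Or.inr ⟨Equiv.Perm.sameCycle_inv.mp h1a, Equiv.Perm.sameCycle_inv.mp h1b⟩)

/-- Each orbit of `pi w` contains at most one point that is not the max of a letter. -/
lemma invC : ∀ (w : List (SGen n)), OrdW w → ∀ x y : Fin n, (pi w).SameCycle x y →
    x = y ∨ (∃ q ∈ w, q.1.2 = x) ∨ (∃ q ∈ w, q.1.2 = y) := by
  intro w
  induction w with
  | nil =>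
    intro _ x y h
    exact Or.inl (by simpa [Equiv.Perm.sameCycle_one] using h)
  | cons g w' ih =>
    intro hw x y h
    have hw' : OrdW w' := hw.tail
    have hmax : ∀ q ∈ w', g.1.2 < q.1.2 := ord_all hw
    rw [pi_cons] at h
    rcases sc_swap_mul h with hs | ⟨hxi, hyj⟩ | ⟨hxj, hyi⟩
    · rcases ih hw' x y hs with h1 | ⟨q, hq, he⟩ | ⟨q, hq, he⟩
      · exact Or.inl h1
      · exact Or.inr (Or.inl ⟨q, List.mem_cons_of_mem _ hq, he⟩)
      · exact Or.inr (Or.inr ⟨q, List.mem_cons_of_mem _ hq, he⟩)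
    · rcases ih hw' y g.1.2 hyj with h1 | ⟨q, hq, he⟩ | ⟨q, hq, he⟩
      · exact Or.inr (Or.inr ⟨g, List.mem_cons_self, h1.symm⟩)
      · exact Or.inr (Or.inr ⟨q, List.mem_cons_of_mem _ hq, he⟩)
      · exact absurd he (ne_of_gt (hmax q hq))
    · rcases ih hw' x g.1.2 hxj with h1 | ⟨q, hq, he⟩ | ⟨q, hq, he⟩
      · exact Or.inr (Or.inl ⟨g, List.mem_cons_self, h1.symm⟩)
      · exact Or.inr (Or.inl ⟨q, List.mem_cons_of_mem _ hq, he⟩)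
      · exact absurd he (ne_of_gt (hmax q hq))

/-! ### Products of generators in the quotient -/

noncomputable def Mw (w : List (SGen n)) : RingQuot (grRel n) := (w.map gq).prod

@[simp] lemma Mw_nil : Mw ([] : List (SGen n)) = 1 := rfl

lemma Mw_cons (g : SGen n) (w : List (SGen n)) : Mw (g :: w) = gq g * Mw w := by
  simp [Mw]

lemma Mw_singleton (g : SGen n) : Mw [g] = gq g := by simp [Mw]

/-! ### Evaluation of monomials in the representation -/

lemma eval_Mw : ∀ (w : List (SGen n)), OrdW w →
    rho n (Mw w) (Finsupp.single 1 1) = Finsupp.single (piR w) 1 ∧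
      ell (piR w) = w.length := by
  intro w
  induction w with
  | nil =>
    intro _
    constructor
    · rw [Mw_nil, map_one]
      rfl
    · rw [piR_nil, ell_one]
      rfl
  | cons g w ih =>
    intro hw
    obtain ⟨h1, h2⟩ := ih hw.tail
    have hfresh : ¬ (piR w).SameCycle g.1.1 g.1.2 := by
      rw [sc_piR]
      intro hc
      rcases invC w hw.tail _ _ hc with he | ⟨q, hq, he⟩ | ⟨q, hq, he⟩
      · exact (tg_ne g) he
      · exact absurd he (ne_of_gt (lt_trans g.2 (ord_all hw q hq)))
      · exact absurd he (ne_of_gt (ord_all hw q hq))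
    have hadd : ell (piR w * tg g) = ell (piR w) + 1 := ell_mul_swap_eq (tg_ne g) hfresh
    constructor
    · rw [Mw_cons, map_mul, Module.End.mul_apply, h1, rho_gq, Aop_single, if_pos hadd,
        piR_cons]
    · rw [piR_cons, hadd, h2, List.length_cons]

/-! ### Injectivity of `pi` on ordered words -/

lemma pi_fix {w : List (SGen n)} {x : Fin n}
    (h : ∀ q ∈ w, q.1.1 ≠ x ∧ q.1.2 ≠ x) : pi w x = x := by
  induction w with
  | nil => rfl
  | cons g w ih =>
    rw [pi_cons, Equiv.Perm.mul_apply, ih (fun q hq => h q (List.mem_cons_of_mem _ hq))]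
    exact Equiv.swap_apply_of_ne_of_ne (h g (List.mem_cons_self)).1.symm
      (h g (List.mem_cons_self)).2.symm

lemma pi_top {w : List (SGen n)} {g : SGen n} (hw : OrdW (w ++ [g])) :
    (pi (w ++ [g]))⁻¹ g.1.2 = g.1.1 ∧ pi (w ++ [g]) g.1.2 ≠ g.1.2 ∧
      ∀ x, g.1.2 < x → pi (w ++ [g]) x = x := by
  have hidx : ∀ q ∈ w, q.1.2 < g.1.2 := by
    have hp := List.isChain_iff_pairwise.mp hw
    have h2 := (List.pairwise_append.mp hp).2.2
    exact fun q hq => h2 q hq g (List.mem_singleton_self g)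
  have hfix : pi w g.1.2 = g.1.2 :=
    pi_fix (fun q hq => ⟨ne_of_lt (lt_trans q.2 (hidx q hq)), ne_of_lt (hidx q hq)⟩)
  have hfix2 : (pi w)⁻¹ g.1.2 = g.1.2 := by
    rw [Equiv.Perm.inv_eq_iff_eq]
    exact hfix.symm
  refine ⟨?_, ?_, ?_⟩
  · rw [pi_concat, mul_inv_rev, Equiv.Perm.mul_apply, hfix2,
      show (tg g)⁻¹ = Equiv.swap g.1.1 g.1.2 by rw [show tg g = Equiv.swap g.1.1 g.1.2 from rfl, Equiv.swap_inv],
      Equiv.swap_apply_right]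
  · rw [pi_concat, Equiv.Perm.mul_apply, show tg g = Equiv.swap g.1.1 g.1.2 from rfl,
      Equiv.swap_apply_right]
    intro hc
    have : g.1.1 = (pi w)⁻¹ g.1.2 := by rw [← hc]; exact (Equiv.symm_apply_apply _ _).symm
    rw [hfix2] at this
    exact (tg_ne g) this
  · intro x hx
    rw [pi_concat, Equiv.Perm.mul_apply, show tg g = Equiv.swap g.1.1 g.1.2 from rfl,
      Equiv.swap_apply_of_ne_of_ne (ne_of_gt (lt_trans g.2 hx)) (ne_of_gt hx)]
    exact pi_fix (fun q hq => ⟨ne_of_lt (lt_trans q.2 (lt_trans (hidx q hq) hx)),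
      ne_of_lt (lt_trans (hidx q hq) hx)⟩)

lemma ord_prefix {w : List (SGen n)} {g : SGen n} (hw : OrdW (w ++ [g])) : OrdW w :=
  (List.isChain_append.mp hw).1

lemma pi_inj : ∀ (N : ℕ) (w₁ w₂ : List (SGen n)), w₁.length ≤ N → OrdW w₁ → OrdW w₂ →
    pi w₁ = pi w₂ → w₁ = w₂ := by
  intro N
  induction N with
  | zero =>
    intro w₁ w₂ hlen h1 h2 heq
    have hw1 : w₁ = [] := List.length_eq_zero_iff.mp (Nat.le_zero.mp hlen)
    subst hw1
    rcases w₂.eq_nil_or_concat' with rfl | ⟨u, g, rfl⟩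
    · rfl
    · exfalso
      exact (pi_top h2).2.1 (by rw [← heq]; rfl)
  | succ N ih =>
    intro w₁ w₂ hlen h1 h2 heq
    rcases w₁.eq_nil_or_concat' with rfl | ⟨u₁, g₁, rfl⟩
    · rcases w₂.eq_nil_or_concat' with rfl | ⟨u₂, g₂, rfl⟩
      · rfl
      · exact absurd (by rw [← heq]; rfl) (pi_top h2).2.1
    · rcases w₂.eq_nil_or_concat' with rfl | ⟨u₂, g₂, rfl⟩
      · exact absurd (by rw [heq]; rfl) (pi_top h1).2.1
      · have hj : g₁.1.2 = g₂.1.2 := by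
          by_contra hne
          rcases Ne.lt_or_gt hne with hlt | hlt
          · exact (pi_top h2).2.1 (by rw [← heq]; exact (pi_top h1).2.2 _ hlt)
          · exact (pi_top h1).2.1 (by rw [heq]; exact (pi_top h2).2.2 _ hlt)
        have hi : g₁.1.1 = g₂.1.1 := by
          have e1 := (pi_top h1).1
          have e2 := (pi_top h2).1
          rw [heq, hj] at e1
          rw [e2] at e1
          exact e1.symm
        have hg : g₁ = g₂ := Subtype.ext (Prod.ext hi hj)
        subst hg
        have hpi : pi u₁ = pi u₂ := by
          have := heq
          rw [pi_concat, pi_concat] at this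
          exact mul_right_cancel this
        have hlen' : u₁.length ≤ N := by
          have := hlen
          rw [List.length_append, List.length_singleton] at this
          omega
        rw [ih u₁ u₂ hlen' (ord_prefix h1) (ord_prefix h2) hpi]

/-! ### Surjectivity of `pi` onto the symmetric group -/

lemma pi_surj : ∀ (k : ℕ) (σ : Perm (Fin n)), σ.support.card ≤ k →
    ∃ w : List (SGen n), OrdW w ∧ (∀ q ∈ w, q.1.2 ∈ σ.support) ∧ pi w = σ := by
  intro k
  induction k with
  | zero =>
    intro σ hσ
    have h1 : σ = 1 := by
      rw [← Equiv.Perm.support_eq_empty_iff]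
      exact Finset.card_eq_zero.mp (Nat.le_zero.mp hσ)
    subst h1
    exact ⟨[], List.isChain_nil, by simp, rfl⟩
  | succ k ih =>
    intro σ hσ
    by_cases hne : σ = 1
    · subst hne
      exact ⟨[], List.isChain_nil, by simp, rfl⟩
    obtain ⟨i, j, hij, hσi, hjs, hmax, hsupp, -⟩ := peel hne
    have hilt : i < j := by
      have himem : i ∈ σ.support := Equiv.Perm.mem_support.mpr (by
        rw [hσi]; exact fun hc => hij hc.symm)
      exact lt_of_le_of_ne (hmax i himem) hij
    have hcard : (σ * Equiv.swap i j).support.card ≤ k := by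
      have h1 : (σ.support.erase j).card < σ.support.card := Finset.card_erase_lt_of_mem hjs
      have h2 := Finset.card_le_card hsupp
      omega
    obtain ⟨w₀, hord, hsup, hpi⟩ := ih (σ * Equiv.swap i j) hcard
    refine ⟨w₀ ++ [⟨(i, j), hilt⟩], ?_, ?_, ?_⟩
    · apply List.isChain_append.mpr
      refine ⟨hord, List.isChain_singleton _, ?_⟩
      intro x hx y hy
      have hyg : y = ⟨(i, j), hilt⟩ := by
        have := hy
        simp only [List.head?] at this
        exact (Option.mem_some_iff.mp this).symm
      have hxw : x ∈ w₀ := by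
        obtain ⟨hne', hx2⟩ := List.mem_getLast?_eq_getLast hx
        exact hx2 ▸ List.getLast_mem hne'
      have hxs := hsupp (hsup x hxw)
      obtain ⟨hxj, hxσ⟩ := Finset.mem_erase.mp hxs
      rw [hyg]
      exact lt_of_le_of_ne (hmax _ hxσ) hxj
    · intro q hq
      rcases List.mem_append.mp hq with hq' | hq'
      · exact Finset.mem_of_mem_erase (hsupp (hsup q hq'))
      · have : q = ⟨(i, j), hilt⟩ := List.mem_singleton.mp hq'
        rw [this]
        exact hjs
    · refine (pi_concat w₀ _).trans ?_
      rw [hpi]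
      show σ * Equiv.swap i j * tg _ = σ
      rw [show tg (⟨(i, j), hilt⟩ : SGen n) = Equiv.swap i j from rfl,
        mul_assoc, Equiv.swap_mul_self, mul_one]
/-! ### Relations in the quotient -/

lemma mkA_sgen (i j : Fin n) (h : i ≠ j) : mkA n (sgen i j h) = gq (pr i j h) := by
  rw [sgen_eq]
  rfl

lemma gq_sq (i j : Fin n) (h : i ≠ j) :
    mkA n (sgen i j h) * mkA n (sgen i j h) = 0 := by
  have h1 := RingQuot.mkAlgHom_rel ℂ (grRel.sq i j h)
  rw [map_mul, map_zero] at h1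
  exact h1

lemma gq_braid (i j k : Fin n) (hij : i ≠ j) (hjk : j ≠ k) (hik : i ≠ k) :
    mkA n (sgen i j hij) * mkA n (sgen j k hjk) =
      mkA n (sgen i k hik) * mkA n (sgen i j hij) := by
  have h1 := RingQuot.mkAlgHom_rel ℂ (grRel.braid i j k hij hjk hik)
  rw [map_mul, map_mul] at h1
  exact h1

lemma gq_comm (i j k l : Fin n) (hij : i ≠ j) (hkl : k ≠ l) (hik : i ≠ k) (hil : i ≠ l)
    (hjk : j ≠ k) (hjl : j ≠ l) :
    mkA n (sgen i j hij) * mkA n (sgen k l hkl) =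
      mkA n (sgen k l hkl) * mkA n (sgen i j hij) := by
  have h1 := RingQuot.mkAlgHom_rel ℂ (grRel.comm i j k l hij hkl hik hil hjk hjl)
  rw [map_mul, map_mul] at h1
  exact h1

/-! ### The straightening / spanning argument -/

noncomputable def Sk (n k : ℕ) : Submodule ℂ (RingQuot (grRel n)) :=
  Submodule.span ℂ (Mw '' {w : List (SGen n) | OrdW w ∧ w.length ≤ k})

lemma Sk_mono {k k' : ℕ} (h : k ≤ k') : Sk n k ≤ Sk n k' :=
  Submodule.span_mono (Set.image_mono (fun _ hw => ⟨hw.1, hw.2.trans h⟩))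

lemma Mw_mem_Sk {w : List (SGen n)} (hw : OrdW w) {k : ℕ} (h : w.length ≤ k) :
    Mw w ∈ Sk n k := Submodule.subset_span ⟨w, ⟨hw, h⟩, rfl⟩

lemma key : ∀ (N : ℕ) (g : SGen n) (w : List (SGen n)), OrdW w →
    w.length * n + (g.1.2 : ℕ) ≤ N → gq g * Mw w ∈ Sk n (w.length + 1) := by
  intro N
  induction N with
  | zero =>
    intro g w hw hN
    have hn : 0 < n := g.1.2.pos
    have hw0 : w = [] := by
      have h0 : w.length * n = 0 := by omega
      rcases Nat.mul_eq_zero.mp h0 with h' | h'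
      · exact List.length_eq_zero_iff.mp h'
      · omega
    subst hw0
    rw [Mw_nil, mul_one, ← Mw_singleton]
    exact Mw_mem_Sk (List.isChain_singleton g) le_rfl
  | succ N ih =>
    intro g w hw hN
    obtain ⟨⟨i, j⟩, hij⟩ := g
    rcases w with _ | ⟨⟨⟨k, l⟩, hkl⟩, w'⟩
    · erw [Mw_nil, mul_one, ← Mw_singleton]
      exact Mw_mem_Sk (List.isChain_singleton _) le_rfl
    have hn : 0 < n := j.pos
    erw [List.length_cons] at hN ⊢
    change (w'.length + 1) * n + (j : ℕ) ≤ N + 1 at hN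
    have hmul : (w'.length + 1) * n = w'.length * n + n := by ring
    rw [hmul] at hN
    have htail : OrdW w' := hw.tail
    have hhead : ∀ y ∈ w'.head?, (⟨(k, l), hkl⟩ : SGen n).1.2 < y.1.2 :=
      (List.isChain_cons.mp hw).1
    rcases lt_trichotomy j l with hjl | hjl | hjl
    · -- j < l : already ordered
      have hord : OrdW (⟨(i, j), hij⟩ :: ⟨(k, l), hkl⟩ :: w') :=
        List.isChain_cons_cons.mpr ⟨hjl, hw⟩
      erw [← Mw_cons]
      exact Mw_mem_Sk hord le_rfl
    · -- j = l
      subst hjl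
      by_cases hik : i = k
      · -- the same generator twice: square relation
        subst hik
        have hz : gq (⟨(i, j), hij⟩ : SGen n) * gq (⟨(i, j), hkl⟩ : SGen n) = 0 := by
          have h1 := gq_sq i j (ne_of_lt hij)
          rw [mkA_sgen, pr_lt hij] at h1
          exact h1
        erw [Mw_cons, ← mul_assoc, hz, zero_mul]
        exact Submodule.zero_mem _
      · -- braid relation with the same max
        have hjk : j ≠ k := ne_of_gt hkl
        have heq : gq (⟨(i, j), hij⟩ : SGen n) * gq (⟨(k, j), hkl⟩ : SGen n) =
            gq (pr i k hik) * gq (⟨(i, j), hij⟩ : SGen n) := by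
          have h1 := gq_braid i j k (ne_of_lt hij) hjk hik
          rw [mkA_sgen i j, pr_lt hij, mkA_sgen j k, pr_gt hkl, mkA_sgen i k] at h1
          exact h1
        have hord2 : OrdW (⟨(i, j), hij⟩ :: w') := List.isChain_cons.mpr ⟨hhead, htail⟩
        erw [Mw_cons, ← mul_assoc, heq, mul_assoc, ← Mw_cons]
        have hlt : ((pr i k hik).1.2 : ℕ) < (j : ℕ) := pr_snd_lt hik hij hkl
        have hm := ih (pr i k hik) (⟨(i, j), hij⟩ :: w') hord2 (by
          erw [List.length_cons]
          rw [hmul]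
          omega)
        exact hm
    · -- l < j
      have hmeasw' : w'.length * n + (j : ℕ) ≤ N := by omega
      obtain ⟨a, b, heq, ha, hbmem⟩ :
          ∃ a b : SGen n,
            gq (⟨(i, j), hij⟩ : SGen n) * gq (⟨(k, l), hkl⟩ : SGen n) = gq a * gq b ∧
              ((a.1.2 : ℕ) < (j : ℕ)) ∧ gq b * Mw w' ∈ Sk n (w'.length + 1) := by
        by_cases hik : i = k
        · subst hik
          refine ⟨⟨(i, l), hkl⟩, ⟨(l, j), hjl⟩, ?_, hjl, ?_⟩
          · have h1 := gq_braid i l j (ne_of_lt hkl) (ne_of_lt hjl) (ne_of_lt hij)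
            rw [mkA_sgen i l, pr_lt hkl, mkA_sgen l j, pr_lt hjl, mkA_sgen i j,
              pr_lt hij] at h1
            exact h1.symm
          · exact ih _ w' htail hmeasw'
        · by_cases hil : i = l
          · subst hil
            refine ⟨⟨(k, i), hkl⟩, ⟨(k, j), lt_trans hkl hjl⟩, ?_, hjl, ?_⟩
            · have h1 := gq_braid i k j hik (ne_of_lt (lt_trans hkl hjl)) (ne_of_lt hij)
              rw [mkA_sgen i k, pr_gt hkl, mkA_sgen k j, pr_lt (lt_trans hkl hjl),
                mkA_sgen i j, pr_lt hij] at h1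
              exact h1.symm
            · exact ih _ w' htail hmeasw'
          · refine ⟨⟨(k, l), hkl⟩, ⟨(i, j), hij⟩, ?_, hjl, ?_⟩
            · have h1 := gq_comm i j k l (ne_of_lt hij) (ne_of_lt hkl) hik hil
                (ne_of_gt (lt_trans hkl hjl)) (ne_of_gt hjl)
              rw [mkA_sgen i j, pr_lt hij, mkA_sgen k l, pr_lt hkl] at h1
              exact h1
            · exact ih _ w' htail hmeasw'
      erw [Mw_cons, ← mul_assoc, heq, mul_assoc]
      have hle : (Sk n (w'.length + 1)).map (LinearMap.mulLeft ℂ (gq a)) ≤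
          Sk n (w'.length + 1 + 1) := by
        rw [Sk, Submodule.map_span_le]
        rintro y ⟨u, ⟨hu1, hu2⟩, rfl⟩
        have h2 : u.length * n ≤ (w'.length + 1) * n := Nat.mul_le_mul_right n hu2
        rw [hmul] at h2
        have hm := ih a u hu1 (by omega)
        exact Sk_mono (by omega) hm
      exact hle (Submodule.mem_map_of_mem hbmem)
/-! ### Evaluation functional -/

noncomputable def Fev (n : ℕ) : RingQuot (grRel n) →ₗ[ℂ] W n where
  toFun x := rho n x (Finsupp.single 1 1)
  map_add' x y := by
    show rho n (x + y) (Finsupp.single 1 1) = _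
    rw [map_add]
    exact LinearMap.add_apply _ _ _
  map_smul' c x := by
    show rho n (c • x) (Finsupp.single 1 1) = _
    rw [map_smul]
    exact LinearMap.smul_apply _ _ _

end Stmt14Aux

open Stmt14Aux in
/-- The associated graded algebra `gr ℂ[S_n]`, presented by generators `s_{ij}` with the
homogenized relations, has dimension `n!`, with a basis given by the ordered monomials in
which `max(i_l, j_l)` strictly increases from left to right. -/
theorem stmt14 (n : ℕ) :
    ∃ b : Module.Basis (OrderedWords n) ℂ (RingQuot (grRel n)),
      (∀ w : OrderedWords n,
        b w = (w.1.map (fun p => RingQuot.mkAlgHom ℂ (grRel n) (FreeAlgebra.ι ℂ p))).prod) ∧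
      Nat.card (OrderedWords n) = n.factorial := by
  classical
  have hli : LinearIndependent ℂ (fun w : OrderedWords n => Mw w.1) := by
    apply LinearIndependent.of_comp (Fev n)
    have hcomp : ((Fev n) ∘ fun w : OrderedWords n => Mw w.1) =
        fun w : OrderedWords n => Finsupp.single (piR w.1) (1 : ℂ) := by
      funext w
      exact (eval_Mw w.1 w.2).1
    rw [hcomp]
    have h2 : (fun w : OrderedWords n => Finsupp.single (piR w.1) (1 : ℂ)) =
        (Finsupp.basisSingleOne : Module.Basis (Equiv.Perm (Fin n)) ℂ _) ∘
          fun w : OrderedWords n => piR w.1 := by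
      funext w
      simp [Finsupp.coe_basisSingleOne]
    rw [h2]
    apply (Finsupp.basisSingleOne.linearIndependent).comp
    intro w₁ w₂ hww
    have hww' : piR w₁.1 = piR w₂.1 := hww
    apply Subtype.ext
    apply pi_inj w₁.1.length w₁.1 w₂.1 le_rfl w₁.2 w₂.2
    rw [← piR_inv, ← piR_inv, hww']
  have hsp : ⊤ ≤ Submodule.span ℂ (Set.range fun w : OrderedWords n => Mw w.1) := by
    intro x _
    set SP := Submodule.span ℂ (Set.range fun w : OrderedWords n => Mw w.1) with hSP
    have hSk : ∀ k, Sk n k ≤ SP := by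
      intro k
      apply Submodule.span_le.mpr
      rintro y ⟨u, ⟨hu1, _⟩, rfl⟩
      exact Submodule.subset_span ⟨⟨u, hu1⟩, rfl⟩
    obtain ⟨y, rfl⟩ := RingQuot.mkAlgHom_surjective ℂ (grRel n) x
    have main : ∀ y : FreeAlgebra ℂ (SGen n),
        ∀ s ∈ SP, RingQuot.mkAlgHom ℂ (grRel n) y * s ∈ SP := by
      intro y
      induction y using FreeAlgebra.induction with
      | grade0 r =>
        intro s hs
        rw [AlgHom.commutes, ← Algebra.smul_def]
        exact Submodule.smul_mem _ r hs
      | grade1 g =>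
        intro s hs
        have hle : SP.map (LinearMap.mulLeft ℂ (gq g)) ≤ SP := by
          rw [hSP, Submodule.map_span_le]
          rintro z ⟨w, rfl⟩
          exact hSk _ (key (w.1.length * n + (g.1.2 : ℕ)) g w.1 w.2 le_rfl)
        exact hle (Submodule.mem_map_of_mem hs)
      | mul a b ha hb =>
        intro s hs
        rw [map_mul, mul_assoc]
        exact ha _ (hb s hs)
      | add a b ha hb =>
        intro s hs
        rw [map_add, add_mul]
        exact Submodule.add_mem _ (ha s hs) (hb s hs)
    have h1 : (1 : RingQuot (grRel n)) ∈ SP :=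
      Submodule.subset_span ⟨⟨[], List.isChain_nil⟩, rfl⟩
    have h2 := main y 1 h1
    rwa [mul_one] at h2
  refine ⟨Module.Basis.mk hli hsp, fun w => ?_, ?_⟩
  · rw [Module.Basis.mk_apply]
    rfl
  · have hbij : Function.Bijective (fun w : OrderedWords n => pi w.1) := by
      constructor
      · intro a b h
        exact Subtype.ext (pi_inj a.1.length a.1 b.1 le_rfl a.2 b.2 h)
      · intro σ
        obtain ⟨w, hw, -, hpiw⟩ := pi_surj σ.support.card σ le_rfl
        exact ⟨⟨w, hw⟩, hpiw⟩
    rw [Nat.card_congr (Equiv.ofBijective _ hbij), Nat.card_eq_fintype_card,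
      Fintype.card_perm, Fintype.card_fin]
end
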